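/- arXiv:1506.00156 — 5 statements merged into one kernel-verified Lean document; each statement's English description precedes it below -/
import Mathlib

section
/- Let F be a finitely generated free group and A a subgroup of F. Then there exists a free factor C of F such that A ≤ C and A fills C. -/
/-- `C` is a free factor of the group `G`: there is a subgroup `D` of `G` such that the
homomorphism `C ∗ D →* G` induced by the two inclusion maps is an isomorphism. -/
def Subgroup.IsFreeFactor {G : Type*} [Group G] (C : Subgroup G) : Prop :=
  ∃ D : Subgroup G, Function.Bijective ⇑(Monoid.Coprod.lift C.subtype D.subtype)

/-- The group `G` splits as a free product relative to its subgroup `H`: there are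
nontrivial subgroups `C` and `D` of `G` such that the homomorphism `C ∗ D →* G` induced
by the inclusions is an isomorphism, and `H` is contained in a conjugate of `C` or in a
conjugate of `D`. -/
def SplitsFreeProductRel (G : Type*) [Group G] (H : Subgroup G) : Prop :=
  ∃ C D : Subgroup G, C ≠ ⊥ ∧ D ≠ ⊥ ∧
    Function.Bijective ⇑(Monoid.Coprod.lift C.subtype D.subtype) ∧
    ((∃ g : G, ∀ h ∈ H, g * h * g⁻¹ ∈ C) ∨ (∃ g : G, ∀ h ∈ H, g * h * g⁻¹ ∈ D))

/-- The subgroup `H` fills the group `G` if `G` does not split as a free product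
relative to `H`. -/
def FillsGroup (G : Type*) [Group G] (H : Subgroup G) : Prop :=
  ¬ SplitsFreeProductRel G H

/-- For subgroups `H, K` of an ambient group (with `H ≤ K` in applications):
`H` fills `K`. -/
def Fills {Γ : Type*} [Group Γ] (H K : Subgroup Γ) : Prop :=
  FillsGroup ↥K (H.subgroupOf K)

open Monoid Function
open scoped TensorProduct

namespace L22

variable {G : Type*} [Group G]

/-- The isomorphism `C ∗ D ≃* G` coming from a bijective lift. -/
noncomputable def splitIso {C D : Subgroup G}
    (h : Bijective ⇑(Coprod.lift C.subtype D.subtype)) : Coprod C D ≃* G :=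
  MulEquiv.ofBijective _ h

@[simp] lemma splitIso_inl {C D : Subgroup G} (h : Bijective ⇑(Coprod.lift C.subtype D.subtype))
    (c : C) : splitIso h (Coprod.inl c) = (c : G) := by
  simp [splitIso]

@[simp] lemma splitIso_inr {C D : Subgroup G} (h : Bijective ⇑(Coprod.lift C.subtype D.subtype))
    (d : D) : splitIso h (Coprod.inr d) = (d : G) := by
  simp [splitIso]

lemma splitIso_symm_coe_left {C D : Subgroup G}
    (h : Bijective ⇑(Coprod.lift C.subtype D.subtype)) (c : C) :
    (splitIso h).symm (c : G) = Coprod.inl c := by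
  rw [MulEquiv.symm_apply_eq]; simp

lemma splitIso_symm_coe_right {C D : Subgroup G}
    (h : Bijective ⇑(Coprod.lift C.subtype D.subtype)) (d : D) :
    (splitIso h).symm (d : G) = Coprod.inr d := by
  rw [MulEquiv.symm_apply_eq]; simp

/-- Retraction onto the left factor. -/
noncomputable def retrL {C D : Subgroup G}
    (h : Bijective ⇑(Coprod.lift C.subtype D.subtype)) : G →* C :=
  (Coprod.lift (MonoidHom.id C) 1).comp (splitIso h).symm.toMonoidHom

/-- Retraction onto the right factor. -/
noncomputable def retrR {C D : Subgroup G}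
    (h : Bijective ⇑(Coprod.lift C.subtype D.subtype)) : G →* D :=
  (Coprod.lift 1 (MonoidHom.id D)).comp (splitIso h).symm.toMonoidHom

@[simp] lemma retrL_coe_left {C D : Subgroup G} (h : Bijective ⇑(Coprod.lift C.subtype D.subtype))
    (c : C) : retrL h (c : G) = c := by
  simp [retrL, splitIso_symm_coe_left h c]

@[simp] lemma retrL_coe_right {C D : Subgroup G} (h : Bijective ⇑(Coprod.lift C.subtype D.subtype))
    (d : D) : retrL h (d : G) = 1 := by
  simp [retrL, splitIso_symm_coe_right h d]

@[simp] lemma retrR_coe_left {C D : Subgroup G} (h : Bijective ⇑(Coprod.lift C.subtype D.subtype))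
    (c : C) : retrR h (c : G) = 1 := by
  simp [retrR, splitIso_symm_coe_left h c]

@[simp] lemma retrR_coe_right {C D : Subgroup G} (h : Bijective ⇑(Coprod.lift C.subtype D.subtype))
    (d : D) : retrR h (d : G) = d := by
  simp [retrR, splitIso_symm_coe_right h d]

lemma fg_left {C D : Subgroup G} (hG : Group.FG G)
    (h : Bijective ⇑(Coprod.lift C.subtype D.subtype)) : Group.FG C :=
  Group.fg_of_surjective (f := retrL h) fun c => ⟨c, by simp⟩

lemma fg_right {C D : Subgroup G} (hG : Group.FG G)
    (h : Bijective ⇑(Coprod.lift C.subtype D.subtype)) : Group.FG D :=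
  Group.fg_of_surjective (f := retrR h) fun d => ⟨d, by simp⟩



/-- The rationalized abelianization of a group. -/
abbrev Vsp (G : Type*) [Group G] : Type _ := ℚ ⊗[ℤ] (Additive (Abelianization G))

/-- The "rational rank" measure of a group. -/
noncomputable def nu (G : Type*) [Group G] : ℕ := Module.finrank ℚ (Vsp G)

variable {G H K : Type*} [Group G] [Group H] [Group K]

/-- Functorial linear map on rationalized abelianizations. -/
noncomputable def Lmap (f : G →* H) : Vsp G →ₗ[ℚ] Vsp H :=
  ((MonoidHom.toAdditive (Abelianization.map f)).toIntLinearMap).baseChange ℚ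

lemma Lmap_comp (f : G →* H) (g : H →* K) :
    Lmap (g.comp f) = (Lmap g).comp (Lmap f) := by
  rw [Lmap, Lmap, Lmap, ← LinearMap.baseChange_comp]
  congr 1
  have : Abelianization.map (g.comp f) = (Abelianization.map g).comp (Abelianization.map f) :=
    (Abelianization.map_comp f g).symm
  rw [this]
  rfl

lemma Lmap_id : Lmap (MonoidHom.id G) = LinearMap.id := by
  rw [Lmap, Abelianization.map_id]
  have : MonoidHom.toAdditive (MonoidHom.id (Abelianization G)) =
      AddMonoidHom.id (Additive (Abelianization G)) := rfl
  rw [this]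
  have : (AddMonoidHom.id (Additive (Abelianization G))).toIntLinearMap = LinearMap.id := rfl
  rw [this, LinearMap.baseChange_id]

lemma Lmap_one : Lmap (1 : G →* H) = 0 := by
  have h1 : Abelianization.map (1 : G →* H) = 1 := by
    apply Abelianization.hom_ext
    ext x
    simp
  rw [Lmap, h1]
  have : (MonoidHom.toAdditive (1 : Abelianization G →* Abelianization H)).toIntLinearMap
      = (0 : _ →ₗ[ℤ] _) := rfl
  rw [this, LinearMap.baseChange_zero]

lemma abelianizationMap_surjective {f : G →* H} (hf : Surjective f) :
    Surjective (Abelianization.map f) := fun x =>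
  QuotientGroup.induction_on x fun h => by
    obtain ⟨g, rfl⟩ := hf h
    exact ⟨Abelianization.of g, rfl⟩

lemma Lmap_surjective {f : G →* H} (hf : Surjective f) : Surjective (Lmap f) := by
  rw [Lmap]
  rw [show (((MonoidHom.toAdditive (Abelianization.map f)).toIntLinearMap).baseChange ℚ :
      Vsp G → Vsp H) =
    LinearMap.lTensor ℚ ((MonoidHom.toAdditive (Abelianization.map f)).toIntLinearMap) from
      LinearMap.baseChange_eq_ltensor _]
  exact LinearMap.lTensor_surjective ℚ (abelianizationMap_surjective hf)

lemma finiteVsp (hG : Group.FG G) : Module.Finite ℚ (Vsp G) := by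
  have hsur : Surjective (Abelianization.of (G := G)) :=
    fun x => QuotientGroup.induction_on x fun g => ⟨g, rfl⟩
  have h1 : Group.FG (Abelianization G) := @Group.fg_of_surjective _ _ _ _ hG _ hsur
  have h2 : AddGroup.FG (Additive (Abelianization G)) := GroupFG.iff_add_fg.mp h1
  have h3 : Module.Finite ℤ (Additive (Abelianization G)) :=
    Module.Finite.iff_addGroup_fg.mpr h2
  infer_instance

lemma nu_congr (e : G ≃* H) : nu G = nu H := by
  have e2 : Vsp G ≃ₗ[ℚ] Vsp H :=
    ((MulEquiv.toAdditive e.abelianizationCongr).toIntLinearEquiv).baseChange ℤ ℚ _ _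
  exact e2.finrank_eq



variable {H K : Type*} [Group H] [Group K]

lemma nontrivial_Vsp_of_surj (f : G →* Multiplicative ℤ) (hf : Surjective f) :
    Nontrivial (Vsp G) := by
  have h1 : Nontrivial (Vsp (Multiplicative ℤ)) := by
    have e1 : Additive (Abelianization (Multiplicative ℤ)) ≃+ ℤ :=
      (MulEquiv.toAdditive (Abelianization.equivOfComm (H := Multiplicative ℤ)).symm).trans
        (AddEquiv.additiveMultiplicative ℤ)
    have e2 : Vsp (Multiplicative ℤ) ≃ₗ[ℚ] ℚ ⊗[ℤ] ℤ :=
      (e1.toIntLinearEquiv).baseChange ℤ ℚ _ _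
    have e3 : ℚ ⊗[ℤ] ℤ ≃ₗ[ℤ] ℚ := TensorProduct.rid ℤ ℚ
    have hn : Nontrivial (ℚ ⊗[ℤ] ℤ) := e3.toEquiv.nontrivial
    exact e2.toEquiv.nontrivial
  exact (Lmap_surjective hf).nontrivial

lemma nu_pos [IsFreeGroup G] (hG : Group.FG G) (hnt : Nontrivial G) : 1 ≤ nu G := by
  have hne : Nonempty (IsFreeGroup.Generators G) := by
    by_contra hempty
    rw [not_nonempty_iff] at hempty
    have h : (MonoidHom.id G) = (1 : G →* G) := IsFreeGroup.ext_hom (fun a => (hempty.false a).elim)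
    obtain ⟨x, y, hxy⟩ := hnt
    apply hxy
    have hx : x = 1 := by have := DFunLike.congr_fun h x; simpa using this
    have hy : y = 1 := by have := DFunLike.congr_fun h y; simpa using this
    rw [hx, hy]
  obtain ⟨a⟩ := hne
  set f : G →* Multiplicative ℤ :=
    IsFreeGroup.lift (fun _ => Multiplicative.ofAdd (1 : ℤ)) with hfdef
  have hf : Surjective f := by
    intro z
    refine ⟨(IsFreeGroup.of a) ^ (z.toAdd), ?_⟩
    rw [map_zpow, hfdef, IsFreeGroup.lift_of, ← ofAdd_zsmul]
    simp
  have h1 : Nontrivial (Vsp G) := nontrivial_Vsp_of_surj f hf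
  have h2 : Module.Finite ℚ (Vsp G) := finiteVsp hG
  have h3 := (Module.finrank_pos_iff (R := ℚ) (M := Vsp G)).mpr h1
  rw [nu]
  omega

lemma nu_add_le {C D : Subgroup G} (hG : Group.FG G)
    (h : Bijective ⇑(Coprod.lift C.subtype D.subtype)) : nu C + nu D ≤ nu G := by
  have hCfg : Group.FG C := fg_left hG h
  have hDfg : Group.FG D := fg_right hG h
  have hVC : Module.Finite ℚ (Vsp C) := finiteVsp hCfg
  have hVD : Module.Finite ℚ (Vsp D) := finiteVsp hDfg
  have hVG : Module.Finite ℚ (Vsp G) := finiteVsp hG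
  set p : Vsp G →ₗ[ℚ] Vsp ↥C × Vsp ↥D := (Lmap (retrL h)).prod (Lmap (retrR h)) with hp
  have hps : Surjective p := by
    intro ⟨a, b⟩
    refine ⟨Lmap C.subtype a + Lmap D.subtype b, ?_⟩
    have e1 : (retrL h).comp C.subtype = MonoidHom.id C := by
      ext c; simp
    have e2 : (retrL h).comp D.subtype = 1 := by
      ext d; simp
    have e3 : (retrR h).comp C.subtype = 1 := by
      ext c; simp
    have e4 : (retrR h).comp D.subtype = MonoidHom.id D := by
      ext d; simp
    have c1 : Lmap (retrL h) (Lmap C.subtype a) = a := by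
      have := congrArg (fun (m : Vsp C →ₗ[ℚ] Vsp C) => m a) ((Lmap_comp C.subtype (retrL h)).symm)
      simpa [e1, Lmap_id] using this
    have c2 : Lmap (retrL h) (Lmap D.subtype b) = 0 := by
      have := congrArg (fun (m : Vsp D →ₗ[ℚ] Vsp C) => m b) ((Lmap_comp D.subtype (retrL h)).symm)
      simpa [e2, Lmap_one] using this
    have c3 : Lmap (retrR h) (Lmap C.subtype a) = 0 := by
      have := congrArg (fun (m : Vsp C →ₗ[ℚ] Vsp D) => m a) ((Lmap_comp C.subtype (retrR h)).symm)
      simpa [e3, Lmap_one] using this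
    have c4 : Lmap (retrR h) (Lmap D.subtype b) = b := by
      have := congrArg (fun (m : Vsp D →ₗ[ℚ] Vsp D) => m b) ((Lmap_comp D.subtype (retrR h)).symm)
      simpa [e4, Lmap_id] using this
    simp [hp, map_add, c1, c2, c3, c4, Prod.ext_iff]
  have hrank : Module.finrank ℚ (Vsp ↥C × Vsp ↥D) ≤ Module.finrank ℚ (Vsp G) :=
    Cardinal.toNat_le_toNat (p.rank_le_of_surjective hps) (Module.rank_lt_aleph0 ℚ (Vsp G))
  have hprod : Module.finrank ℚ (Vsp ↥C × Vsp ↥D) = nu C + nu D := Module.finrank_prod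
  show Module.finrank ℚ (Vsp ↥C) + Module.finrank ℚ (Vsp ↥D) ≤ Module.finrank ℚ (Vsp G)
  rw [show Module.finrank ℚ (Vsp ↥C) + Module.finrank ℚ (Vsp ↥D) = nu ↥C + nu ↥D from rfl, ← hprod]
  exact hrank

section Transport
variable {G' : Type*} [Group G']

lemma lift_map_bijective (e : G ≃* G') {C D : Subgroup G}
    (h : Bijective ⇑(Coprod.lift C.subtype D.subtype)) :
    Bijective ⇑(Coprod.lift (C.map e.toMonoidHom).subtype (D.map e.toMonoidHom).subtype) := by
  set eC : C ≃* C.map e.toMonoidHom := C.equivMapOfInjective e.toMonoidHom e.injective with heC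
  set eD : D ≃* D.map e.toMonoidHom := D.equivMapOfInjective e.toMonoidHom e.injective with heD
  set m₁ : Coprod C D →* Coprod (C.map e.toMonoidHom) (D.map e.toMonoidHom) :=
    Coprod.map eC.toMonoidHom eD.toMonoidHom with hm₁
  have hm₁b : Bijective ⇑m₁ := by
    set m₂ : Coprod (C.map e.toMonoidHom) (D.map e.toMonoidHom) →* Coprod C D :=
      Coprod.map eC.symm.toMonoidHom eD.symm.toMonoidHom with hm₂
    have h21 : m₂.comp m₁ = MonoidHom.id _ := by
      rw [hm₁, hm₂, Coprod.map_comp_map]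
      have h1 : eC.symm.toMonoidHom.comp eC.toMonoidHom = MonoidHom.id C := by ext x; exact congrArg Subtype.val (eC.symm_apply_apply x)
      have h2 : eD.symm.toMonoidHom.comp eD.toMonoidHom = MonoidHom.id D := by ext x; exact congrArg Subtype.val (eD.symm_apply_apply x)
      rw [h1, h2, Coprod.map_id_id]
    have h12 : m₁.comp m₂ = MonoidHom.id _ := by
      rw [hm₁, hm₂, Coprod.map_comp_map]
      have h1 : eC.toMonoidHom.comp eC.symm.toMonoidHom = MonoidHom.id _ := by ext x; exact congrArg Subtype.val (eC.apply_symm_apply x)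
      have h2 : eD.toMonoidHom.comp eD.symm.toMonoidHom = MonoidHom.id _ := by ext x; exact congrArg Subtype.val (eD.apply_symm_apply x)
      rw [h1, h2, Coprod.map_id_id]
    exact Function.bijective_iff_has_inverse.mpr
      ⟨⇑m₂, fun x => DFunLike.congr_fun h21 x, fun x => DFunLike.congr_fun h12 x⟩
  have hcomp :
      (Coprod.lift (C.map e.toMonoidHom).subtype (D.map e.toMonoidHom).subtype).comp m₁ =
        e.toMonoidHom.comp (Coprod.lift C.subtype D.subtype) := by
    apply Coprod.hom_ext
    · ext c
      simp only [hm₁, MonoidHom.comp_apply, Coprod.map_apply_inl, Coprod.lift_apply_inl]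
      rfl
    · ext d
      simp only [hm₁, MonoidHom.comp_apply, Coprod.map_apply_inr, Coprod.lift_apply_inr]
      rfl
  have hb : Bijective
      (⇑(Coprod.lift (C.map e.toMonoidHom).subtype (D.map e.toMonoidHom).subtype) ∘ ⇑m₁) := by
    have : ⇑(Coprod.lift (C.map e.toMonoidHom).subtype (D.map e.toMonoidHom).subtype) ∘ ⇑m₁ =
        ⇑e ∘ ⇑(Coprod.lift C.subtype D.subtype) := by
      funext x
      exact DFunLike.congr_fun hcomp x
    rw [this]
    exact e.bijective.comp h
  exact (Function.Bijective.of_comp_iff _ hm₁b).mp hb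

lemma splits_map (e : G ≃* G') {A : Subgroup G} (hs : SplitsFreeProductRel G A) :
    SplitsFreeProductRel G' (A.map e.toMonoidHom) := by
  obtain ⟨C, D, hC, hD, hbij, hcase⟩ := hs
  refine ⟨C.map e.toMonoidHom, D.map e.toMonoidHom, ?_, ?_, lift_map_bijective e hbij, ?_⟩
  · intro hbot
    apply hC
    rw [Subgroup.map_eq_bot_iff_of_injective _ e.injective] at hbot
    exact hbot
  · intro hbot
    apply hD
    rw [Subgroup.map_eq_bot_iff_of_injective _ e.injective] at hbot
    exact hbot
  · rcases hcase with ⟨g, hg⟩ | ⟨g, hg⟩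
    · left
      refine ⟨e g, ?_⟩
      rintro h' ⟨a, ha, rfl⟩
      refine ⟨g * a * g⁻¹, hg a ha, ?_⟩
      simp
    · right
      refine ⟨e g, ?_⟩
      rintro h' ⟨a, ha, rfl⟩
      refine ⟨g * a * g⁻¹, hg a ha, ?_⟩
      simp

lemma map_map_symm (e : G ≃* G') (A : Subgroup G) :
    (A.map e.toMonoidHom).map e.symm.toMonoidHom = A := by
  ext x
  simp only [Subgroup.mem_map]
  constructor
  · rintro ⟨y, ⟨a, ha, rfl⟩, rfl⟩
    simpa using ha
  · intro hx
    exact ⟨e x, ⟨x, hx, rfl⟩, by simp⟩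

lemma fills_map (e : G ≃* G') {A : Subgroup G} (hf : FillsGroup G A) :
    FillsGroup G' (A.map e.toMonoidHom) := by
  intro hs
  apply hf
  have := splits_map e.symm hs
  rwa [map_map_symm] at this

end Transport

lemma top_isFreeFactor : (⊤ : Subgroup G).IsFreeFactor := by
  refine ⟨⊥, ?_, ?_⟩
  · -- injective
    set β : G →* Coprod (⊤ : Subgroup G) (⊥ : Subgroup G) :=
      Coprod.inl.comp (Subgroup.topEquiv (G := G)).symm.toMonoidHom with hβ
    have hcomp : β.comp (Coprod.lift (⊤ : Subgroup G).subtype (⊥ : Subgroup G).subtype) =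
        MonoidHom.id _ := by
      apply Coprod.hom_ext
      · ext c
        simp [hβ]
        rfl
      · ext d
        have hd : d = 1 := Subtype.ext ((Subgroup.mem_bot).mp d.2)
        rw [hd]
        simp
    intro x y hxy
    have hx := DFunLike.congr_fun hcomp x
    have hy := DFunLike.congr_fun hcomp y
    simp only [MonoidHom.comp_apply, MonoidHom.id_apply] at hx hy
    rw [← hx, ← hy, hxy]
  · intro g
    exact ⟨Coprod.inl ⟨g, trivial⟩, by simp⟩

/-- A free factor of a free factor is a free factor. -/
lemma isFreeFactor_map {C₁ : Subgroup G} (h₁ : C₁.IsFreeFactor)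
    {C₂ : Subgroup ↥C₁} (h₂ : C₂.IsFreeFactor) : (C₂.map C₁.subtype).IsFreeFactor := by
  obtain ⟨D₁, hb₁⟩ := h₁
  obtain ⟨D₂, hb₂⟩ := h₂
  set C₃ : Subgroup G := C₂.map C₁.subtype with hC₃
  set D₂' : Subgroup G := D₂.map C₁.subtype with hD₂'
  set D₃ : Subgroup G := D₂' ⊔ D₁ with hD₃
  refine ⟨D₃, ?_, ?_⟩
  · -- injectivity via an explicit retraction β
    set e₂ : C₂ ≃* C₃ := C₂.equivMapOfInjective C₁.subtype C₁.subtype_injective with he₂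
    set eD : D₂ ≃* D₂' := D₂.equivMapOfInjective C₁.subtype C₁.subtype_injective with heD
    set T := Coprod ↥C₃ ↥D₃ with hT
    set u : ↥C₁ →* T :=
      (Coprod.lift ((Coprod.inl : ↥C₃ →* T).comp e₂.toMonoidHom)
        ((Coprod.inr : ↥D₃ →* T).comp
          ((Subgroup.inclusion (le_sup_left : D₂' ≤ D₃)).comp eD.toMonoidHom))).comp
        (splitIso hb₂).symm.toMonoidHom with hu
    set v : ↥D₁ →* T :=
      (Coprod.inr : ↥D₃ →* T).comp (Subgroup.inclusion (le_sup_right : D₁ ≤ D₃)) with hv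
    set β : G →* T := (Coprod.lift u v).comp (splitIso hb₁).symm.toMonoidHom with hβ
    have hβD : ∀ x (hx : x ∈ D₃), β x = Coprod.inr ⟨x, hx⟩ := by
      intro x hx
      have hx' : x ∈ Subgroup.closure ((D₂' : Set G) ∪ (D₁ : Set G)) := by
        rwa [← Subgroup.sup_eq_closure]
      have key : ∃ hm : x ∈ D₃, β x = Coprod.inr ⟨x, hm⟩ := by
        clear hx
        induction hx' using Subgroup.closure_induction with
        | mem y hy =>
          rcases hy with hy | hy
          · -- y ∈ D₂'
            have hyD₃ : y ∈ D₃ := (le_sup_left : D₂' ≤ D₃) hy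
            refine ⟨hyD₃, ?_⟩
            obtain ⟨z, hz, rfl⟩ := hy
            rw [hβ]
            simp only [MonoidHom.comp_apply, MulEquiv.coe_toMonoidHom, Subgroup.coe_subtype]
            rw [splitIso_symm_coe_left hb₁ z, Coprod.lift_apply_inl, hu]
            simp only [MonoidHom.comp_apply, MulEquiv.coe_toMonoidHom]
            rw [splitIso_symm_coe_right hb₂ ⟨z, hz⟩, Coprod.lift_apply_inr]
            simp only [MonoidHom.comp_apply, MulEquiv.coe_toMonoidHom]
            congr 1
          · -- y ∈ D₁
            have hyD₃ : y ∈ D₃ := (le_sup_right : D₁ ≤ D₃) hy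
            refine ⟨hyD₃, ?_⟩
            rw [hβ]
            simp only [MonoidHom.comp_apply, MulEquiv.coe_toMonoidHom]
            rw [splitIso_symm_coe_right hb₁ ⟨y, hy⟩, Coprod.lift_apply_inr, hv]
            simp only [MonoidHom.comp_apply]
            congr 1
        | one =>
          refine ⟨one_mem _, ?_⟩
          rw [map_one]
          have : (⟨(1 : G), one_mem D₃⟩ : ↥D₃) = 1 := rfl
          rw [this, map_one]
        | mul a b _ _ iha ihb =>
          obtain ⟨ha, hba⟩ := iha
          obtain ⟨hb, hbb⟩ := ihb
          refine ⟨mul_mem ha hb, ?_⟩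
          rw [map_mul, hba, hbb, ← map_mul]
          congr 1
        | inv a _ iha =>
          obtain ⟨ha, hba⟩ := iha
          refine ⟨inv_mem ha, ?_⟩
          rw [map_inv, hba, ← map_inv]
          congr 1
      obtain ⟨hm, hres⟩ := key
      exact hres
    have hcomp : β.comp (Coprod.lift C₃.subtype D₃.subtype) = MonoidHom.id T := by
      apply Coprod.hom_ext
      · ext c
        simp only [MonoidHom.comp_apply, Coprod.lift_apply_inl, MonoidHom.id_apply]
        obtain ⟨y, hy, hyc⟩ := c.2
        have hcy : (c : G) = (y : G) := hyc.symm
        rw [hβ]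
        simp only [MonoidHom.comp_apply, MulEquiv.coe_toMonoidHom]
        rw [Subgroup.coe_subtype, hcy, splitIso_symm_coe_left hb₁ y, Coprod.lift_apply_inl, hu]
        simp only [MonoidHom.comp_apply, MulEquiv.coe_toMonoidHom]
        rw [splitIso_symm_coe_left hb₂ ⟨y, hy⟩, Coprod.lift_apply_inl]
        simp only [MonoidHom.comp_apply, MulEquiv.coe_toMonoidHom]
        exact congrArg Coprod.inl (Subtype.ext hyc : e₂ ⟨y, hy⟩ = c)
      · ext d
        simp only [MonoidHom.comp_apply, Coprod.lift_apply_inr, MonoidHom.id_apply,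
          Subgroup.coe_subtype]
        rw [hβD (d : G) d.2]
        rfl
    intro x y hxy
    have hx := DFunLike.congr_fun hcomp x
    have hy := DFunLike.congr_fun hcomp y
    simp only [MonoidHom.comp_apply, MonoidHom.id_apply] at hx hy
    exact hx.symm.trans ((congrArg β hxy).trans hy)
  · -- surjectivity
    rw [← MonoidHom.range_eq_top]
    rw [Coprod.range_lift, Subgroup.range_subtype, Subgroup.range_subtype]
    have h2 : C₂ ⊔ D₂ = (⊤ : Subgroup ↥C₁) := by
      have := MonoidHom.range_eq_top.mpr hb₂.surjective
      rw [Coprod.range_lift, Subgroup.range_subtype, Subgroup.range_subtype] at this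
      exact this
    have h1 : C₁ ⊔ D₁ = (⊤ : Subgroup G) := by
      have := MonoidHom.range_eq_top.mpr hb₁.surjective
      rw [Coprod.range_lift, Subgroup.range_subtype, Subgroup.range_subtype] at this
      exact this
    have hmap : C₃ ⊔ D₂' = C₁ := by
      rw [hC₃, hD₂', ← Subgroup.map_sup, h2]
      ext x
      simp [Subgroup.mem_map]
    rw [hD₃, ← sup_assoc, hmap, h1]

lemma bij_swap {C D : Subgroup G} (h : Bijective ⇑(Coprod.lift C.subtype D.subtype)) :
    Bijective ⇑(Coprod.lift D.subtype C.subtype) := by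
  have hsw : Bijective ⇑(Coprod.swap (↥D) (↥C)) :=
    Function.bijective_iff_has_inverse.mpr
      ⟨⇑(Coprod.swap (↥C) (↥D)), fun x => Coprod.swap_swap x, fun x => Coprod.swap_swap x⟩
  have h1 : ⇑(Coprod.lift D.subtype C.subtype) =
      ⇑(Coprod.lift C.subtype D.subtype) ∘ ⇑(Coprod.swap (↥D) (↥C)) := by
    funext x
    exact (Coprod.lift_swap _ _ x).symm
  rw [h1]
  exact h.comp hsw

end L22

namespace L22

universe u

theorem key (n : ℕ) :
    ∀ (G : Type u) [Group G] [IsFreeGroup G], Group.FG G → nu G ≤ n →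
      ∀ A : Subgroup G, ∃ C : Subgroup G, C.IsFreeFactor ∧ A ≤ C ∧
        FillsGroup ↥C (A.subgroupOf C) := by
  induction n using Nat.strong_induction_on with
  | _ n ih =>
  intro G _ _ hFG hn A
  by_cases hsplit : SplitsFreeProductRel G A
  · obtain ⟨C, D, hC, hD, hbij, hcase⟩ := hsplit
    have main : ∀ (C D : Subgroup G), D ≠ ⊥ →
        Bijective ⇑(Coprod.lift C.subtype D.subtype) →
        (∃ g : G, ∀ a ∈ A, g * a * g⁻¹ ∈ C) →
        ∃ C' : Subgroup G, C'.IsFreeFactor ∧ A ≤ C' ∧ FillsGroup ↥C' (A.subgroupOf C') := by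
      clear hbij hC hD hcase C D
      rintro C D hD hbij ⟨g, hg⟩
      set e : G ≃* G := (MulAut.conj g⁻¹ : MulAut G) with he
      set C₁ : Subgroup G := C.map e.toMonoidHom with hC₁
      have hA1 : A ≤ C₁ := by
        intro a ha
        refine ⟨g * a * g⁻¹, hg a ha, ?_⟩
        have h' : e.toMonoidHom (g * a * g⁻¹) = g⁻¹ * (g * a * g⁻¹) * g⁻¹⁻¹ := rfl
        rw [h']
        group
      have hbij1 : Bijective ⇑(Coprod.lift C₁.subtype (D.map e.toMonoidHom).subtype) :=
        lift_map_bijective e hbij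
      have fgC : Group.FG ↥C := fg_left hFG hbij
      have fgD : Group.FG ↥D := fg_right hFG hbij
      have ntD : Nontrivial ↥D := (Subgroup.nontrivial_iff_ne_bot D).mpr hD
      have hνD : 1 ≤ nu ↥D := nu_pos fgD ntD
      have hνsum : nu ↥C + nu ↥D ≤ nu G := nu_add_le hFG hbij
      have hν₁ : nu ↥C₁ = nu ↥C :=
        (nu_congr (C.equivMapOfInjective e.toMonoidHom e.injective)).symm
      have hlt : nu ↥C₁ < n := by omega
      have fgC₁ : Group.FG ↥C₁ := fg_left hFG hbij1
      obtain ⟨C₂, hff₂, hle₂, hfill₂⟩ := ih (nu ↥C₁) hlt ↥C₁ fgC₁ le_rfl (A.subgroupOf C₁)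
      set C₃ : Subgroup G := C₂.map C₁.subtype with hC₃
      refine ⟨C₃, isFreeFactor_map ⟨D.map e.toMonoidHom, hbij1⟩ hff₂, ?_, ?_⟩
      · intro a ha
        exact ⟨⟨a, hA1 ha⟩, hle₂ (Subgroup.mem_subgroupOf.mpr ha), rfl⟩
      · set e₂ : ↥C₂ ≃* ↥C₃ := C₂.equivMapOfInjective C₁.subtype C₁.subtype_injective with he₂
        have heq : ((A.subgroupOf C₁).subgroupOf C₂).map e₂.toMonoidHom = A.subgroupOf C₃ := by
          ext x
          simp only [Subgroup.mem_map, Subgroup.mem_subgroupOf]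
          constructor
          · rintro ⟨y, hy, rfl⟩
            exact hy
          · intro hx
            obtain ⟨y, hy, hyx⟩ := x.2
            refine ⟨⟨y, hy⟩, ?_, ?_⟩
            · show ((y : ↥C₁) : G) ∈ A
              have h'' : ((y : ↥C₁) : G) = (x : G) := hyx
              rw [h'']
              exact hx
            · refine Subtype.ext ?_
              rw [show ((e₂.toMonoidHom ⟨y, hy⟩ : ↥C₃) : G)
                  = C₁.subtype (⟨y, hy⟩ : ↥C₂) from
                Subgroup.coe_equivMapOfInjective_apply _ _ _ _]
              exact hyx
        have := fills_map e₂ hfill₂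
        rwa [heq] at this
    rcases hcase with hg | hg
    · exact main C D hD hbij hg
    · exact main D C hC (bij_swap hbij) hg
  · refine ⟨⊤, top_isFreeFactor, le_top, ?_⟩
    have heq : A.map (Subgroup.topEquiv (G := G)).symm.toMonoidHom = A.subgroupOf ⊤ := by
      ext x
      simp only [Subgroup.mem_map, Subgroup.mem_subgroupOf]
      constructor
      · rintro ⟨a, ha, rfl⟩
        exact ha
      · intro hx
        exact ⟨(x : G), hx, Subtype.ext rfl⟩
    have := fills_map (Subgroup.topEquiv (G := G)).symm hsplit
    rwa [heq] at this

end L22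

/-- **Existence part of Lemma 2.2**: if `F` is a finitely generated free group and
`A ≤ F` a subgroup, then there is a free factor `C` of `F` with `A ≤ C` which is
filled by `A`. -/
theorem exists_free_factor_core (F : Type*) [Group F] [IsFreeGroup F]
    (hF : Group.FG F) (A : Subgroup F) :
    ∃ C : Subgroup F, C.IsFreeFactor ∧ A ≤ C ∧ Fills A C := by
  obtain ⟨C, h1, h2, h3⟩ := L22.key (L22.nu F) F hF le_rfl A
  exact ⟨C, h1, h2, h3⟩
end

section
/- Let K be a finitely generated free group, G a subgroup of K, and H a nontrivial subgroup of G. Suppose C is a free factor of G with H ≤ C such that H fills C, and C' is a free factor of K with H ≤ C' such that H fills C'. Then C ≤ C'. -/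
open Monoid Subgroup

namespace KuroshKey

variable {Y₁ Y₂ : Type*}

/-- the standard left free factor -/
def A : Subgroup (FreeGroup (Y₁ ⊕ Y₂)) :=
  Subgroup.closure (Set.range (FreeGroup.of ∘ Sum.inl))

variable (C : Subgroup (FreeGroup (Y₁ ⊕ Y₂)))

/-- base vertex -/
def root : (FreeGroup (Y₁ ⊕ Y₂)) ⧸ C := ((1 : FreeGroup (Y₁ ⊕ Y₂)) : (FreeGroup (Y₁ ⊕ Y₂)) ⧸ C)

theorem smul_root_eq (g : FreeGroup (Y₁ ⊕ Y₂)) : g • root C = root C ↔ g ∈ C := by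
  show ((g * 1 : FreeGroup (Y₁ ⊕ Y₂)) : _ ⧸ C) = ((1: FreeGroup (Y₁ ⊕ Y₂)) : _ ⧸ C) ↔ _
  rw [mul_one, QuotientGroup.eq]
  simp

theorem exists_smul_root (v : (FreeGroup (Y₁ ⊕ Y₂)) ⧸ C) : ∃ g : FreeGroup (Y₁ ⊕ Y₂), g • root C = v := by
  obtain ⟨g, rfl⟩ := QuotientGroup.mk_surjective v
  exact ⟨g, by show ((g * 1 : FreeGroup (Y₁ ⊕ Y₂)) : _ ⧸ C) = _; rw [mul_one]⟩

/-- the `A`-orbit of the base vertex -/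
def P (v : (FreeGroup (Y₁ ⊕ Y₂)) ⧸ C) : Prop := ∃ a ∈ (A : Subgroup (FreeGroup (Y₁ ⊕ Y₂))), a • root C = v

theorem P_root : P C (root C) := ⟨1, one_mem _, one_smul _ _⟩

theorem P_smul {a : FreeGroup (Y₁ ⊕ Y₂)} (ha : a ∈ (A : Subgroup (FreeGroup (Y₁ ⊕ Y₂))))
    {v : (FreeGroup (Y₁ ⊕ Y₂)) ⧸ C} (hv : P C v) : P C (a • v) := by
  obtain ⟨b, hb, rfl⟩ := hv
  exact ⟨a * b, mul_mem ha hb, mul_smul a b _⟩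

/-- evaluation of a word in the generators -/
def evalZ (l : List ((Y₁ ⊕ Y₂) × Bool)) : FreeGroup (Y₁ ⊕ Y₂) :=
  (l.map fun p => cond p.2 (FreeGroup.of p.1) (FreeGroup.of p.1)⁻¹).prod

/-- a word is an `A`-word if all its letters are from `Y₁` -/
def AllL (l : List ((Y₁ ⊕ Y₂) × Bool)) : Prop := ∀ p ∈ l, (p.1 : Y₁ ⊕ Y₂).isLeft = true

theorem evalZ_nil : evalZ ([] : List ((Y₁ ⊕ Y₂) × Bool)) = 1 := rfl

theorem evalZ_cons (p : (Y₁ ⊕ Y₂) × Bool) (l : List ((Y₁ ⊕ Y₂) × Bool)) :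
    evalZ (p :: l) = (cond p.2 (FreeGroup.of p.1) (FreeGroup.of p.1)⁻¹) * evalZ l := by
  simp [evalZ]

theorem evalZ_append (l₁ l₂ : List ((Y₁ ⊕ Y₂) × Bool)) :
    evalZ (l₁ ++ l₂) = evalZ l₁ * evalZ l₂ := by
  simp [evalZ]

theorem of_mem_A (y : Y₁) : FreeGroup.of (Sum.inl y : Y₁ ⊕ Y₂) ∈ (A : Subgroup (FreeGroup (Y₁ ⊕ Y₂))) :=
  Subgroup.subset_closure ⟨y, rfl⟩

theorem evalZ_mem_A {l : List ((Y₁ ⊕ Y₂) × Bool)} (hl : AllL l) :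
    evalZ l ∈ (A : Subgroup (FreeGroup (Y₁ ⊕ Y₂))) := by
  induction l with
  | nil => exact one_mem _
  | cons p l ih =>
    rw [evalZ_cons]
    have hp : (p.1).isLeft = true := hl p (by simp)
    obtain ⟨y, hy⟩ := Sum.isLeft_iff.mp hp
    have h1 : FreeGroup.of p.1 ∈ (A : Subgroup (FreeGroup (Y₁ ⊕ Y₂))) := hy ▸ of_mem_A y
    refine mul_mem ?_ (ih fun q hq => hl q (by simp [hq]))
    cases p.2 <;> simp [h1, inv_mem h1]

theorem evalZ_reverse (l : List ((Y₁ ⊕ Y₂) × Bool)) :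
    evalZ (l.reverse.map fun p => (p.1, !p.2)) = (evalZ l)⁻¹ := by
  induction l with
  | nil => simp [evalZ]
  | cons p l ih =>
    rw [evalZ_cons, mul_inv_rev, ← ih]
    simp only [List.reverse_cons, List.map_append, List.map_cons, List.map_nil]
    rw [evalZ_append]
    congr 1
    cases hp : p.2 <;> simp [evalZ]

theorem mem_A_iff (g : FreeGroup (Y₁ ⊕ Y₂)) :
    g ∈ (A : Subgroup (FreeGroup (Y₁ ⊕ Y₂))) ↔ ∃ l, AllL l ∧ evalZ l = g := by
  constructor
  · intro hg
    induction hg using Subgroup.closure_induction with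
    | mem x hx =>
      obtain ⟨y, rfl⟩ := hx
      exact ⟨[(Sum.inl y, true)], by intro p hp; simp at hp; simp [hp], by simp [evalZ]⟩
    | one => exact ⟨[], by intro p hp; simp at hp, rfl⟩
    | mul x y _ _ hx hy =>
      obtain ⟨l₁, hl₁, rfl⟩ := hx
      obtain ⟨l₂, hl₂, rfl⟩ := hy
      refine ⟨l₁ ++ l₂, ?_, evalZ_append _ _⟩
      intro p hp
      rcases List.mem_append.mp hp with h | h
      exacts [hl₁ p h, hl₂ p h]
    | inv x _ hx =>
      obtain ⟨l, hl, rfl⟩ := hx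
      refine ⟨l.reverse.map fun p => (p.1, !p.2), ?_, ?_⟩
      · intro p hp
        simp only [List.mem_map, List.mem_reverse] at hp
        obtain ⟨q, hq, rfl⟩ := hp
        exact hl q hq
      · exact evalZ_reverse l
  · rintro ⟨l, hl, rfl⟩
    exact evalZ_mem_A hl

theorem exists_evalZ (g : FreeGroup (Y₁ ⊕ Y₂)) : ∃ l, evalZ l = g := by
  induction g using FreeGroup.induction_on with
  | C1 => exact ⟨[], rfl⟩
  | of z => exact ⟨[(z, true)], by simp [evalZ]⟩
  | inv_of z _ => exact ⟨[(z, false)], by simp [evalZ]⟩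
  | mul x y hx hy =>
    obtain ⟨l₁, rfl⟩ := hx
    obtain ⟨l₂, rfl⟩ := hy
    exact ⟨l₁ ++ l₂, evalZ_append _ _⟩

/-- the set whose infimum is `d₁` -/
def d₁set (v : (FreeGroup (Y₁ ⊕ Y₂)) ⧸ C) : Set ℕ :=
  {n | ∃ l : List ((Y₁ ⊕ Y₂) × Bool), AllL l ∧ evalZ l • root C = v ∧ l.length = n}

/-- distance within the `A`-orbit -/
noncomputable def d₁ (v : (FreeGroup (Y₁ ⊕ Y₂)) ⧸ C) : ℕ := sInf (d₁set C v)

theorem d₁set_nonempty {v : (FreeGroup (Y₁ ⊕ Y₂)) ⧸ C} (hv : P C v) : (d₁set C v).Nonempty := by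
  obtain ⟨a, haA, rfl⟩ := hv
  obtain ⟨l, hl, rfl⟩ := (mem_A_iff a).mp haA
  exact ⟨l.length, l, hl, rfl, rfl⟩

theorem d₁_root : d₁ C (root C) = 0 :=
  Nat.eq_zero_of_le_zero (Nat.sInf_le ⟨[], by intro p hp; simp at hp, by simp [evalZ_nil], rfl⟩)

open scoped Classical in
/-- adapted cost of a walk from the base vertex -/
noncomputable def cost : List ((Y₁ ⊕ Y₂) × Bool) → ℕ
  | [] => 0
  | (p :: l) => if P C (evalZ (p :: l) • root C) then d₁ C (evalZ (p :: l) • root C)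
      else cost l + 1

/-- the set whose infimum is the height of a vertex outside the `A`-orbit -/
def htset (v : (FreeGroup (Y₁ ⊕ Y₂)) ⧸ C) : Set ℕ :=
  {n | ∃ l : List ((Y₁ ⊕ Y₂) × Bool), evalZ l • root C = v ∧ cost C l = n}

open scoped Classical in
/-- adapted height function on vertices -/
noncomputable def ht (v : (FreeGroup (Y₁ ⊕ Y₂)) ⧸ C) : ℕ :=
  if P C v then d₁ C v else sInf (htset C v)

theorem htset_nonempty (v : (FreeGroup (Y₁ ⊕ Y₂)) ⧸ C) : (htset C v).Nonempty := by
  obtain ⟨g, hg⟩ := exists_smul_root C v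
  obtain ⟨l, rfl⟩ := exists_evalZ g
  exact ⟨cost C l, l, hg, rfl⟩

open scoped Classical in
/-- any walk ending at a vertex costs at least its height -/
theorem ht_le_cost (l : List ((Y₁ ⊕ Y₂) × Bool)) : ht C (evalZ l • root C) ≤ cost C l := by
  cases l with
  | nil =>
    have : evalZ ([] : List ((Y₁ ⊕ Y₂) × Bool)) • root C = root C := by simp [evalZ_nil]
    rw [this, ht, if_pos (P_root C), d₁_root, cost]
  | cons p l =>
    by_cases hP : P C (evalZ (p :: l) • root C)
    · rw [ht, if_pos hP, cost, if_pos hP]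
    · rw [ht, if_neg hP, cost, if_neg hP]
      exact Nat.sInf_le ⟨p :: l, rfl, by rw [cost, if_neg hP]⟩



open scoped Classical in
theorem exists_parent (v : (FreeGroup (Y₁ ⊕ Y₂)) ⧸ C) (hv : v ≠ root C) :
    ∃ (u : (FreeGroup (Y₁ ⊕ Y₂)) ⧸ C) (z : Y₁ ⊕ Y₂) (b : Bool),
      (cond b (FreeGroup.of z • u = v) (FreeGroup.of z • v = u)) ∧ ht C u < ht C v ∧
      (P C v → (P C u ∧ z.isLeft = true)) := by
  by_cases hP : P C v
  · have hmem := Nat.sInf_mem (d₁set_nonempty C hP)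
    obtain ⟨l, hl, hend, hlen⟩ := hmem
    cases l with
    | nil => exact absurd (by simpa [evalZ_nil] using hend.symm) hv
    | cons p l' =>
      have htail : AllL l' := fun q hq => hl q (by simp [hq])
      refine ⟨evalZ l' • root C, p.1, p.2, ?_, ?_, fun _ => ⟨⟨evalZ l', evalZ_mem_A htail, rfl⟩,
        hl p (by simp)⟩⟩
      · rcases hb : p.2 with _ | _
        · -- p.2 = false
          have : evalZ (p :: l') = (FreeGroup.of p.1)⁻¹ * evalZ l' := by
            rw [evalZ_cons, hb]
            rfl
          rw [this, mul_smul] at hend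
          simp only [cond_false]
          rw [← hend]
          simp [smul_smul]
        · have : evalZ (p :: l') = (FreeGroup.of p.1) * evalZ l' := by
            rw [evalZ_cons, hb]
            rfl
          rw [this, mul_smul] at hend
          simpa using hend
      · have hPu : P C (evalZ l' • root C) := ⟨evalZ l', evalZ_mem_A htail, rfl⟩
        rw [ht, if_pos hPu, ht, if_pos hP]
        have h1 : d₁ C (evalZ l' • root C) ≤ l'.length :=
          Nat.sInf_le ⟨l', htail, rfl, rfl⟩
        have h2 : d₁ C v = l'.length + 1 := by
          rw [d₁, ← hlen]; rfl
        omega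
  · have hmem := Nat.sInf_mem (htset_nonempty C v)
    obtain ⟨l, hend, hcost⟩ := hmem
    cases l with
    | nil => exact absurd (by simpa [evalZ_nil] using hend.symm) hv
    | cons p l' =>
      refine ⟨evalZ l' • root C, p.1, p.2, ?_, ?_, fun h => absurd h hP⟩
      · rcases hb : p.2 with _ | _
        · have : evalZ (p :: l') = (FreeGroup.of p.1)⁻¹ * evalZ l' := by
            rw [evalZ_cons, hb]
            rfl
          rw [this, mul_smul] at hend
          simp only [cond_false]
          rw [← hend]
          simp [smul_smul]
        · have : evalZ (p :: l') = (FreeGroup.of p.1) * evalZ l' := by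
            rw [evalZ_cons, hb]
            rfl
          rw [this, mul_smul] at hend
          simpa using hend
      · have hcost' : cost C (p :: l') = cost C l' + 1 := by
          rw [cost, if_neg (hend ▸ hP)]
        have hhtv : ht C v = cost C l' + 1 := by
          rw [ht, if_neg hP, ← hcost, hcost']
        have h2 : ht C (evalZ l' • root C) ≤ cost C l' := ht_le_cost C l'
        omega

open scoped Classical in
/-- parent data: parent vertex, edge label, edge direction -/
noncomputable def pdata (v : (FreeGroup (Y₁ ⊕ Y₂)) ⧸ C) (hv : v ≠ root C) :
    ((FreeGroup (Y₁ ⊕ Y₂)) ⧸ C) × (Y₁ ⊕ Y₂) × Bool :=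
  ⟨(exists_parent C v hv).choose, (exists_parent C v hv).choose_spec.choose,
    (exists_parent C v hv).choose_spec.choose_spec.choose⟩

theorem pdata_spec (v : (FreeGroup (Y₁ ⊕ Y₂)) ⧸ C) (hv : v ≠ root C) :
    (cond (pdata C v hv).2.2 (FreeGroup.of (pdata C v hv).2.1 • (pdata C v hv).1 = v)
      (FreeGroup.of (pdata C v hv).2.1 • v = (pdata C v hv).1)) ∧
    ht C (pdata C v hv).1 < ht C v ∧
    (P C v → (P C (pdata C v hv).1 ∧ (pdata C v hv).2.1.isLeft = true)) :=
  (exists_parent C v hv).choose_spec.choose_spec.choose_spec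

/-- the group element labelling the parent edge, oriented from the parent to the vertex -/
noncomputable def pedge (v : (FreeGroup (Y₁ ⊕ Y₂)) ⧸ C) (hv : v ≠ root C) : FreeGroup (Y₁ ⊕ Y₂) :=
  cond (pdata C v hv).2.2 (FreeGroup.of (pdata C v hv).2.1) (FreeGroup.of (pdata C v hv).2.1)⁻¹

theorem pedge_smul (v : (FreeGroup (Y₁ ⊕ Y₂)) ⧸ C) (hv : v ≠ root C) :
    pedge C v hv • (pdata C v hv).1 = v := by
  have := (pdata_spec C v hv).1
  rcases hb : (pdata C v hv).2.2 with _ | _ <;> rw [hb] at this <;> simp only [cond_false, cond_true] at this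
  · rw [pedge, hb]
    simp only [cond_false]
    rw [← this]
    simp [smul_smul]
  · rw [pedge, hb]
    simpa using this

open scoped Classical in
/-- the spanning-tree word of a vertex -/
noncomputable def w (v : (FreeGroup (Y₁ ⊕ Y₂)) ⧸ C) : FreeGroup (Y₁ ⊕ Y₂) :=
  if hv : v = root C then 1 else pedge C v hv * w (pdata C v hv).1
  termination_by ht C v
  decreasing_by exact (pdata_spec C v hv).2.1

theorem w_root : w C (root C) = 1 := by
  rw [w]
  simp

theorem w_ne (v : (FreeGroup (Y₁ ⊕ Y₂)) ⧸ C) (hv : v ≠ root C) :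
    w C v = pedge C v hv * w C (pdata C v hv).1 := by
  conv_lhs => rw [w]
  simp [hv]

theorem w_smul (v : (FreeGroup (Y₁ ⊕ Y₂)) ⧸ C) : w C v • root C = v := by
  suffices h : ∀ n (v : (FreeGroup (Y₁ ⊕ Y₂)) ⧸ C), ht C v ≤ n → w C v • root C = v from
    h (ht C v) v le_rfl
  intro n
  induction n with
  | zero =>
    intro v hv
    by_cases h : v = root C
    · subst h; rw [w_root]; simp
    · exact absurd (lt_of_lt_of_le (pdata_spec C v h).2.1 hv) (Nat.not_lt_zero _)
  | succ n ih =>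
    intro v hv
    by_cases h : v = root C
    · subst h; rw [w_root]; simp
    · rw [w_ne C v h, mul_smul, ih _ (Nat.lt_succ_iff.mp (lt_of_lt_of_le (pdata_spec C v h).2.1 hv)),
        pedge_smul]

theorem w_mem_A (v : (FreeGroup (Y₁ ⊕ Y₂)) ⧸ C) (hv : P C v) :
    w C v ∈ (A : Subgroup (FreeGroup (Y₁ ⊕ Y₂))) := by
  suffices h : ∀ n (v : (FreeGroup (Y₁ ⊕ Y₂)) ⧸ C), ht C v ≤ n → P C v →
      w C v ∈ (A : Subgroup (FreeGroup (Y₁ ⊕ Y₂))) from h (ht C v) v le_rfl hv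
  intro n
  induction n with
  | zero =>
    intro v hv _
    by_cases h : v = root C
    · subst h; rw [w_root]; exact one_mem _
    · exact absurd (lt_of_lt_of_le (pdata_spec C v h).2.1 hv) (Nat.not_lt_zero _)
  | succ n ih =>
    intro v hv hP
    by_cases h : v = root C
    · subst h; rw [w_root]; exact one_mem _
    · rw [w_ne C v h]
      obtain ⟨hPpar, hleft⟩ := (pdata_spec C v h).2.2 hP
      obtain ⟨y, hy⟩ := Sum.isLeft_iff.mp hleft
      have hA : FreeGroup.of (pdata C v h).2.1 ∈ (A : Subgroup (FreeGroup (Y₁ ⊕ Y₂))) :=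
        hy ▸ of_mem_A y
      refine mul_mem ?_ (ih _ (Nat.lt_succ_iff.mp (lt_of_lt_of_le (pdata_spec C v h).2.1 hv)) hPpar)
      rw [pedge]
      rcases (pdata C v h).2.2 with _ | _
      · simpa using inv_mem hA
      · simpa using hA


/-! ### Loops and the Schreier generators -/

/-- the Schreier loop element attached to the edge `(v, z)` -/
noncomputable def loopF (v : (FreeGroup (Y₁ ⊕ Y₂)) ⧸ C) (z : Y₁ ⊕ Y₂) : FreeGroup (Y₁ ⊕ Y₂) :=
  (w C (FreeGroup.of z • v))⁻¹ * FreeGroup.of z * w C v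

theorem loopF_mem (v : (FreeGroup (Y₁ ⊕ Y₂)) ⧸ C) (z : Y₁ ⊕ Y₂) : loopF C v z ∈ C := by
  rw [← smul_root_eq, loopF, mul_smul, mul_smul, w_smul]
  rw [inv_smul_eq_iff, w_smul]

/-- the Schreier loop as an element of `C` -/
noncomputable def loopC (v : (FreeGroup (Y₁ ⊕ Y₂)) ⧸ C) (z : Y₁ ⊕ Y₂) : ↥C :=
  ⟨loopF C v z, loopF_mem C v z⟩

/-- the edge `(v, z)` is in the spanning tree -/
def isTree (v : (FreeGroup (Y₁ ⊕ Y₂)) ⧸ C) (z : Y₁ ⊕ Y₂) : Prop :=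
  ∃ (u : (FreeGroup (Y₁ ⊕ Y₂)) ⧸ C) (h1 : u ≠ root C), (pdata C u h1).2.1 = z ∧
    (((pdata C u h1).2.2 = true ∧ (pdata C u h1).1 = v ∧ u = FreeGroup.of z • v) ∨
     ((pdata C u h1).2.2 = false ∧ u = v ∧ (pdata C u h1).1 = FreeGroup.of z • v))

theorem loopF_tree {v : (FreeGroup (Y₁ ⊕ Y₂)) ⧸ C} {z : Y₁ ⊕ Y₂} (h : isTree C v z) :
    loopF C v z = 1 := by
  obtain ⟨u, h1, hlab, hcase | hcase⟩ := h
  · obtain ⟨hdir, hpar, hu⟩ := hcase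
    subst hu
    have hw : w C (FreeGroup.of z • v) = FreeGroup.of z * w C v := by
      rw [w_ne C _ h1, pedge, hdir, hlab, hpar]
      rfl
    rw [loopF, hw]
    group
  · obtain ⟨hdir, hu, hpar⟩ := hcase
    subst hu
    have hw : w C u = (FreeGroup.of z)⁻¹ * w C (FreeGroup.of z • u) := by
      rw [w_ne C u h1, pedge, hdir, hlab, hpar]
      rfl
    rw [loopF, hw]
    group

/-! ### The delta elements and generation -/

/-- the element `w (g • v)⁻¹ * g * w v` of `C` -/
noncomputable def deltaF (g : FreeGroup (Y₁ ⊕ Y₂)) (v : (FreeGroup (Y₁ ⊕ Y₂)) ⧸ C) :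
    FreeGroup (Y₁ ⊕ Y₂) :=
  (w C (g • v))⁻¹ * g * w C v

theorem deltaF_mem (g : FreeGroup (Y₁ ⊕ Y₂)) (v : (FreeGroup (Y₁ ⊕ Y₂)) ⧸ C) :
    deltaF C g v ∈ C := by
  rw [← smul_root_eq, deltaF, mul_smul, mul_smul, w_smul]
  rw [inv_smul_eq_iff, w_smul]

noncomputable def deltaC (g : FreeGroup (Y₁ ⊕ Y₂)) (v : (FreeGroup (Y₁ ⊕ Y₂)) ⧸ C) : ↥C :=
  ⟨deltaF C g v, deltaF_mem C g v⟩

theorem delta_one (v : (FreeGroup (Y₁ ⊕ Y₂)) ⧸ C) : deltaC C 1 v = 1 := by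
  apply Subtype.ext
  simp [deltaC, deltaF]

theorem delta_mul (g₁ g₂ : FreeGroup (Y₁ ⊕ Y₂)) (v : (FreeGroup (Y₁ ⊕ Y₂)) ⧸ C) :
    deltaC C (g₁ * g₂) v = deltaC C g₁ (g₂ • v) * deltaC C g₂ v := by
  apply Subtype.ext
  show deltaF C (g₁ * g₂) v = deltaF C g₁ (g₂ • v) * deltaF C g₂ v
  rw [deltaF, deltaF, deltaF, mul_smul]
  group

theorem delta_inv (g : FreeGroup (Y₁ ⊕ Y₂)) (v : (FreeGroup (Y₁ ⊕ Y₂)) ⧸ C) :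
    deltaC C g⁻¹ v = (deltaC C g (g⁻¹ • v))⁻¹ := by
  apply Subtype.ext
  show deltaF C g⁻¹ v = (deltaF C g (g⁻¹ • v))⁻¹
  rw [deltaF, deltaF, smul_inv_smul]
  group

theorem delta_of (z : Y₁ ⊕ Y₂) (v : (FreeGroup (Y₁ ⊕ Y₂)) ⧸ C) :
    deltaC C (FreeGroup.of z) v = loopC C v z := rfl

theorem delta_self (c : ↥C) : deltaC C c.1 (root C) = c := by
  apply Subtype.ext
  show deltaF C c.1 (root C) = c.1
  rw [deltaF, (smul_root_eq C c.1).mpr c.2, w_root]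
  group

/-- all Schreier loops -/
def allLoops : Set ↥C := {x | ∃ v z, x = loopC C v z}

/-- Schreier loops of `A`-edges based in the `A`-orbit -/
def goodLoops : Set ↥C := {x | ∃ v z, (P C v ∧ Sum.isLeft z = true) ∧ x = loopC C v z}

/-- Schreier loops of non-tree edges which are not good -/
def badLoops : Set ↥C :=
  {x | ∃ v z, ¬ isTree C v z ∧ ¬ (P C v ∧ Sum.isLeft z = true) ∧ x = loopC C v z}

theorem delta_mem_all (g : FreeGroup (Y₁ ⊕ Y₂)) :
    ∀ v, deltaC C g v ∈ Subgroup.closure (allLoops C) := by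
  induction g using FreeGroup.induction_on with
  | C1 =>
    intro v
    rw [show (1 : FreeGroup (Y₁ ⊕ Y₂)) = (1 : FreeGroup (Y₁ ⊕ Y₂)) from rfl, delta_one]
    exact one_mem _
  | of z =>
    intro v
    rw [delta_of]
    exact Subgroup.subset_closure ⟨v, z, rfl⟩
  | inv_of z _ =>
    intro v
    rw [delta_inv, delta_of]
    exact inv_mem (Subgroup.subset_closure ⟨_, z, rfl⟩)
  | mul x y ihx ihy =>
    intro v
    rw [delta_mul]
    exact mul_mem (ihx _) (ihy _)

theorem delta_mem_good {g : FreeGroup (Y₁ ⊕ Y₂)}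
    (hg : g ∈ (A : Subgroup (FreeGroup (Y₁ ⊕ Y₂)))) :
    ∀ v, P C v → deltaC C g v ∈ Subgroup.closure (goodLoops C) := by
  induction hg using Subgroup.closure_induction with
  | mem x hx =>
    intro v hv
    obtain ⟨y, rfl⟩ := hx
    show deltaC C (FreeGroup.of (Sum.inl y)) v ∈ _
    rw [delta_of]
    exact Subgroup.subset_closure ⟨v, Sum.inl y, ⟨hv, rfl⟩, rfl⟩
  | one =>
    intro v hv
    rw [delta_one]
    exact one_mem _
  | mul x y hx hy ihx ihy =>
    intro v hv
    rw [delta_mul]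
    exact mul_mem (ihx _ (P_smul C hy hv)) (ihy _ hv)
  | inv x hx ihx =>
    intro v hv
    rw [delta_inv]
    exact inv_mem (ihx _ (P_smul C (inv_mem hx) hv))

theorem loop_good_mem {v : (FreeGroup (Y₁ ⊕ Y₂)) ⧸ C} {z : Y₁ ⊕ Y₂}
    (h : P C v ∧ Sum.isLeft z = true) :
    loopC C v z ∈ (A : Subgroup (FreeGroup (Y₁ ⊕ Y₂))).subgroupOf C := by
  rw [Subgroup.mem_subgroupOf]
  obtain ⟨hP, hz⟩ := h
  obtain ⟨y, rfl⟩ := Sum.isLeft_iff.mp hz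
  show loopF C v _ ∈ _
  rw [loopF]
  have h1 : FreeGroup.of (Sum.inl y : Y₁ ⊕ Y₂) ∈ (A : Subgroup (FreeGroup (Y₁ ⊕ Y₂))) := of_mem_A y
  exact mul_mem (mul_mem (inv_mem (w_mem_A C _ (P_smul C h1 hP))) h1) (w_mem_A C _ hP)

theorem closure_goodLoops :
    Subgroup.closure (goodLoops C) = (A : Subgroup (FreeGroup (Y₁ ⊕ Y₂))).subgroupOf C := by
  apply le_antisymm
  · rw [Subgroup.closure_le]
    rintro x ⟨v, z, hgood, rfl⟩
    exact loop_good_mem C hgood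
  · intro x hx
    have hxA : (x : FreeGroup (Y₁ ⊕ Y₂)) ∈ (A : Subgroup (FreeGroup (Y₁ ⊕ Y₂))) :=
      Subgroup.mem_subgroupOf.mp hx
    have := delta_mem_good C hxA (root C) (P_root C)
    rwa [delta_self] at this


/-! ### The cocycle homomorphism -/

section Cocycle

variable {X : Type*} [Group X] (fe : ((FreeGroup (Y₁ ⊕ Y₂)) ⧸ C) → (Y₁ ⊕ Y₂) → X)

/-- lift of the labelling to the semidirect product -/
noncomputable def theta : FreeGroup (Y₁ ⊕ Y₂) →*
    (((FreeGroup (Y₁ ⊕ Y₂)) ⧸ C) → X) ⋊[mulAutArrow] FreeGroup (Y₁ ⊕ Y₂) :=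
  FreeGroup.lift fun z =>
    ⟨fun v => fe ((FreeGroup.of z)⁻¹ • v) z, FreeGroup.of z⟩

theorem theta_right (g : FreeGroup (Y₁ ⊕ Y₂)) : (theta C fe g).right = g := by
  have : SemidirectProduct.rightHom.comp (theta C fe) = MonoidHom.id _ := by
    apply FreeGroup.ext_hom
    intro z
    simp [theta]
  exact DFunLike.congr_fun this g

/-- the cocycle -/
noncomputable def lam (g : FreeGroup (Y₁ ⊕ Y₂)) : ((FreeGroup (Y₁ ⊕ Y₂)) ⧸ C) → X :=
  (theta C fe g).left

theorem lam_one (v : (FreeGroup (Y₁ ⊕ Y₂)) ⧸ C) : lam C fe 1 v = 1 := by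
  rw [lam, map_one]
  rfl

theorem lam_mul (g₁ g₂ : FreeGroup (Y₁ ⊕ Y₂)) (v : (FreeGroup (Y₁ ⊕ Y₂)) ⧸ C) :
    lam C fe (g₁ * g₂) v = lam C fe g₁ v * lam C fe g₂ (g₁⁻¹ • v) := by
  rw [lam, map_mul, SemidirectProduct.mul_left, theta_right]
  rfl

theorem lam_of (z : Y₁ ⊕ Y₂) (v : (FreeGroup (Y₁ ⊕ Y₂)) ⧸ C) :
    lam C fe (FreeGroup.of z) v = fe ((FreeGroup.of z)⁻¹ • v) z := by
  rw [lam, theta, FreeGroup.lift_apply_of]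

theorem lam_inv (g : FreeGroup (Y₁ ⊕ Y₂)) (v : (FreeGroup (Y₁ ⊕ Y₂)) ⧸ C) :
    lam C fe g⁻¹ v = (lam C fe g (g • v))⁻¹ := by
  have := lam_mul C fe g g⁻¹ (g • v)
  rw [mul_inv_cancel, lam_one, inv_smul_smul] at this
  exact (mul_eq_one_iff_inv_eq.mp this.symm).symm

variable (hfe : ∀ v z, isTree C v z → fe v z = 1)

include hfe

theorem lam_w (v : (FreeGroup (Y₁ ⊕ Y₂)) ⧸ C) : lam C fe (w C v) v = 1 := by
  suffices h : ∀ n (v : (FreeGroup (Y₁ ⊕ Y₂)) ⧸ C), ht C v ≤ n → lam C fe (w C v) v = 1 from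
    h (ht C v) v le_rfl
  intro n
  induction n with
  | zero =>
    intro v hv
    by_cases h : v = root C
    · subst h; rw [w_root, lam_one]
    · exact absurd (lt_of_lt_of_le (pdata_spec C v h).2.1 hv) (Nat.not_lt_zero _)
  | succ n ih =>
    intro v hv
    by_cases h : v = root C
    · subst h; rw [w_root, lam_one]
    · have hpar : ht C (pdata C v h).1 ≤ n :=
        Nat.lt_succ_iff.mp (lt_of_lt_of_le (pdata_spec C v h).2.1 hv)
      have hsm : (pedge C v h)⁻¹ • v = (pdata C v h).1 := by
        rw [inv_smul_eq_iff, pedge_smul]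
      rw [w_ne C v h, lam_mul, hsm, ih _ hpar, mul_one]
      rcases hdir : (pdata C v h).2.2 with _ | _
      · -- dir = false : the parent edge is `v → (of lab) • v = par`
        have hpedge : pedge C v h = (FreeGroup.of (pdata C v h).2.1)⁻¹ := by
          rw [pedge, hdir]
          rfl
        rw [hpedge, lam_inv, lam_of, inv_smul_smul]
        rw [hfe v _ ⟨v, h, rfl, Or.inr ⟨hdir, rfl, ?_⟩⟩, inv_one]
        have := (pdata_spec C v h).1
        rw [hdir] at this
        exact this.symm
      · -- dir = true : the parent edge is `par → (of lab) • par = v`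
        have hpedge : pedge C v h = FreeGroup.of (pdata C v h).2.1 := by
          rw [pedge, hdir]
          rfl
        rw [hpedge, lam_of]
        have heq : (FreeGroup.of (pdata C v h).2.1)⁻¹ • v = (pdata C v h).1 := by
          rw [← hpedge, hsm]
        rw [heq]
        refine hfe _ _ ⟨v, h, rfl, Or.inl ⟨hdir, rfl, ?_⟩⟩
        rw [← heq, smul_inv_smul]

theorem lam_loop (v : (FreeGroup (Y₁ ⊕ Y₂)) ⧸ C) (z : Y₁ ⊕ Y₂) :
    lam C fe (loopF C v z) (root C) = fe v z := by
  have h1 : loopF C v z = (w C (FreeGroup.of z • v))⁻¹ * (FreeGroup.of z * w C v) := by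
    rw [loopF, mul_assoc]
  rw [h1, lam_mul, lam_inv, inv_inv, w_smul, lam_w C fe hfe, inv_one, one_mul, lam_mul, lam_of,
    inv_smul_smul, lam_w C fe hfe, mul_one]

/-- the induced homomorphism on `C` -/
noncomputable def Phi : ↥C →* X where
  toFun c := lam C fe c.1 (root C)
  map_one' := lam_one C fe (root C)
  map_mul' c₁ c₂ := by
    show lam C fe (c₁.1 * c₂.1) (root C) = _
    rw [lam_mul]
    congr 2
    exact (smul_root_eq C _).mpr (inv_mem c₁.2)

theorem Phi_loop (v : (FreeGroup (Y₁ ⊕ Y₂)) ⧸ C) (z : Y₁ ⊕ Y₂) :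
    Phi C fe (loopC C v z) = fe v z := lam_loop C fe hfe v z

end Cocycle


/-! ### Final assembly -/

/-- the complement subgroup -/
def E : Subgroup ↥C := Subgroup.closure (badLoops C)

open scoped Classical in
/-- the labelling of edges by elements of the coproduct -/
noncomputable def fedge (v : (FreeGroup (Y₁ ⊕ Y₂)) ⧸ C) (z : Y₁ ⊕ Y₂) :
    Coprod ↥((A : Subgroup (FreeGroup (Y₁ ⊕ Y₂))).subgroupOf C) ↥(E C) :=
  if ht1 : isTree C v z then 1
  else if hg : P C v ∧ Sum.isLeft z = true then Coprod.inl ⟨loopC C v z, loop_good_mem C hg⟩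
  else Coprod.inr ⟨loopC C v z, Subgroup.subset_closure ⟨v, z, ht1, hg, rfl⟩⟩

theorem fedge_tree : ∀ v z, isTree C v z → fedge C v z = 1 := by
  intro v z h
  rw [fedge, dif_pos h]

theorem Phi_A (c : ↥C) (hc : c ∈ Subgroup.closure (goodLoops C)) :
    Phi C (fedge C) c = Coprod.inl ⟨c, (closure_goodLoops C).le hc⟩ := by
  induction hc using Subgroup.closure_induction with
  | mem x hx =>
    obtain ⟨v, z, hgood, rfl⟩ := hx
    rw [Phi_loop C (fedge C) (fedge_tree C), fedge]
    split_ifs with ht1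
    · have h1 : loopC C v z = 1 := Subtype.ext (loopF_tree C ht1)
      simp only [h1]
      exact ((congrArg Coprod.inl (Subtype.ext (rfl : ((1 : ↥C) : ↥C) = 1))).trans
        (map_one Coprod.inl)).symm
    · rfl
  | one =>
    rw [map_one]
    exact ((congrArg Coprod.inl (Subtype.ext (rfl : ((1 : ↥C) : ↥C) = 1))).trans
      (map_one Coprod.inl)).symm
  | mul x y hx hy ihx ihy =>
    rw [map_mul, ihx, ihy, ← map_mul]
    rfl
  | inv x hx ihx =>
    rw [map_inv, ihx, ← map_inv]
    rfl

theorem Phi_E (c : ↥C) (hc : c ∈ E C) :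
    Phi C (fedge C) c = Coprod.inr ⟨c, hc⟩ := by
  induction hc using Subgroup.closure_induction with
  | mem x hx =>
    obtain ⟨v, z, hnt, hng, rfl⟩ := hx
    rw [Phi_loop C (fedge C) (fedge_tree C), fedge, dif_neg hnt, dif_neg hng]
  | one =>
    rw [map_one]
    exact ((congrArg Coprod.inr (Subtype.ext (rfl : ((1 : ↥C) : ↥C) = 1))).trans
      (map_one Coprod.inr)).symm
  | mul x y hx hy ihx ihy =>
    rw [map_mul, ihx, ihy, ← map_mul]
    rfl
  | inv x hx ihx =>
    rw [map_inv, ihx, ← map_inv]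
    rfl

theorem comp_id :
    (Phi C (fedge C)).comp
      (Coprod.lift ((A : Subgroup (FreeGroup (Y₁ ⊕ Y₂))).subgroupOf C).subtype (E C).subtype)
      = MonoidHom.id _ := by
  apply Coprod.hom_ext
  · ext x
    show Phi C (fedge C) (x : ↥C) = Coprod.inl x
    have hx : (x : ↥C) ∈ Subgroup.closure (goodLoops C) := by
      rw [closure_goodLoops]
      exact x.2
    rw [Phi_A C _ hx]
  · ext x
    show Phi C (fedge C) (x : ↥C) = Coprod.inr x
    rw [Phi_E C _ x.2]

theorem lift_inj :
    Function.Injective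
      ⇑(Coprod.lift ((A : Subgroup (FreeGroup (Y₁ ⊕ Y₂))).subgroupOf C).subtype (E C).subtype) := by
  intro a b hab
  have ha := DFunLike.congr_fun (comp_id C) a
  have hb := DFunLike.congr_fun (comp_id C) b
  simp only [MonoidHom.comp_apply, MonoidHom.id_apply] at ha hb
  rw [← ha, ← hb, hab]

theorem lift_surj :
    Function.Surjective
      ⇑(Coprod.lift ((A : Subgroup (FreeGroup (Y₁ ⊕ Y₂))).subgroupOf C).subtype (E C).subtype) := by
  intro c
  have hmem : c ∈ Subgroup.closure (allLoops C) := by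
    have := delta_mem_all C c.1 (root C)
    rwa [delta_self] at this
  suffices h : Subgroup.closure (allLoops C) ≤
      (Coprod.lift ((A : Subgroup (FreeGroup (Y₁ ⊕ Y₂))).subgroupOf C).subtype
        (E C).subtype).range by
    obtain ⟨y, hy⟩ := h hmem
    exact ⟨y, hy⟩
  rw [Subgroup.closure_le]
  rintro x ⟨v, z, rfl⟩
  by_cases ht1 : isTree C v z
  · have h1 : loopC C v z = 1 := Subtype.ext (loopF_tree C ht1)
    rw [h1]
    exact one_mem _
  by_cases hg : P C v ∧ Sum.isLeft z = true
  · exact ⟨Coprod.inl ⟨loopC C v z, loop_good_mem C hg⟩, by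
      rw [Coprod.lift_apply_inl]; rfl⟩
  · exact ⟨Coprod.inr ⟨loopC C v z, Subgroup.subset_closure ⟨v, z, ht1, hg, rfl⟩⟩, by
      rw [Coprod.lift_apply_inr]; rfl⟩

theorem concreteKey' :
    ((A : Subgroup (FreeGroup (Y₁ ⊕ Y₂))).subgroupOf C).IsFreeFactor :=
  ⟨E C, lift_inj C, lift_surj C⟩

end KuroshKey

/-- The concrete Kurosh-type key lemma. -/
theorem concreteKey {Y₁ Y₂ : Type*} (C : Subgroup (FreeGroup (Y₁ ⊕ Y₂))) :
    ((Subgroup.closure (Set.range (FreeGroup.of ∘ Sum.inl))).subgroupOf C).IsFreeFactor :=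
  KuroshKey.concreteKey' C

section Transport

variable {P Q : Type*} [Group P] [Group Q]

/-- `Coprod.map` of two bijective homs is bijective. -/
theorem coprod_map_bijective {M N M' N' : Type*} [Monoid M] [Monoid N] [Monoid M'] [Monoid N']
    (e₁ : M ≃* M') (e₂ : N ≃* N') :
    Function.Bijective ⇑(Coprod.map e₁.toMonoidHom e₂.toMonoidHom) := by
  have h1 : (Coprod.map e₁.symm.toMonoidHom e₂.symm.toMonoidHom).comp
      (Coprod.map e₁.toMonoidHom e₂.toMonoidHom) = MonoidHom.id _ := by
    rw [Coprod.map_comp_map]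
    convert Coprod.map_id_id <;> ext x <;> simp
  have h2 : (Coprod.map e₁.toMonoidHom e₂.toMonoidHom).comp
      (Coprod.map e₁.symm.toMonoidHom e₂.symm.toMonoidHom) = MonoidHom.id _ := by
    rw [Coprod.map_comp_map]
    convert Coprod.map_id_id <;> ext x <;> simp
  constructor
  · exact Function.LeftInverse.injective (g := ⇑(Coprod.map e₁.symm.toMonoidHom e₂.symm.toMonoidHom))
      (fun x => by rw [← MonoidHom.comp_apply, h1, MonoidHom.id_apply])
  · exact Function.RightInverse.surjective
      (g := ⇑(Coprod.map e₁.symm.toMonoidHom e₂.symm.toMonoidHom))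
      (fun x => by rw [← MonoidHom.comp_apply, h2, MonoidHom.id_apply])

theorem isFreeFactor_map (τ : P ≃* Q) (B : Subgroup P) (h : B.IsFreeFactor) :
    (Subgroup.map τ.toMonoidHom B).IsFreeFactor := by
  obtain ⟨D, hD⟩ := h
  refine ⟨Subgroup.map τ.toMonoidHom D, ?_⟩
  have key : (Coprod.lift (Subgroup.map τ.toMonoidHom B).subtype
        (Subgroup.map τ.toMonoidHom D).subtype).comp
        (Coprod.map (τ.subgroupMap B).toMonoidHom (τ.subgroupMap D).toMonoidHom)
      = τ.toMonoidHom.comp (Coprod.lift B.subtype D.subtype) := by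
    apply Coprod.hom_ext <;> ext x <;> rfl
  have hco : Function.Bijective (⇑(Coprod.lift (Subgroup.map τ.toMonoidHom B).subtype
      (Subgroup.map τ.toMonoidHom D).subtype) ∘
      ⇑(Coprod.map (τ.subgroupMap B).toMonoidHom (τ.subgroupMap D).toMonoidHom)) := by
    have : ⇑(Coprod.lift (Subgroup.map τ.toMonoidHom B).subtype
        (Subgroup.map τ.toMonoidHom D).subtype) ∘
        ⇑(Coprod.map (τ.subgroupMap B).toMonoidHom (τ.subgroupMap D).toMonoidHom)
        = ⇑τ.toMonoidHom ∘ ⇑(Coprod.lift B.subtype D.subtype) := by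
      funext x
      exact DFunLike.congr_fun key x
    rw [this]
    exact (EquivLike.bijective τ).comp hD
  exact (Function.Bijective.of_comp_iff _ (coprod_map_bijective _ _)).mp hco

theorem map_subgroupOf (τ : P ≃* Q) (A C : Subgroup P) :
    Subgroup.map (τ.subgroupMap C).toMonoidHom (A.subgroupOf C)
      = (Subgroup.map τ.toMonoidHom A).subgroupOf (Subgroup.map τ.toMonoidHom C) := by
  ext x
  simp only [Subgroup.mem_map, Subgroup.mem_subgroupOf]
  constructor
  · rintro ⟨y, hy, rfl⟩
    exact ⟨y.1, hy, rfl⟩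
  · rintro ⟨a, ha, hax⟩
    have hx := x.2
    obtain ⟨c, hc, hcx⟩ := hx
    simp only [MulEquiv.coe_toMonoidHom] at hax
    have hac : a = c := τ.injective (hax.trans hcx.symm)
    refine ⟨⟨a, hac ▸ hc⟩, ha, ?_⟩
    apply Subtype.ext
    exact hax

theorem isFreeFactor_subgroupOf_map (τ : P ≃* Q) (A C : Subgroup P)
    (h : (A.subgroupOf C).IsFreeFactor) :
    ((Subgroup.map τ.toMonoidHom A).subgroupOf (Subgroup.map τ.toMonoidHom C)).IsFreeFactor := by
  rw [← map_subgroupOf τ A C]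
  exact isFreeFactor_map _ _ h

end Transport

/-- Key lemma: if `A` is a free factor of a free group `K` and `C ≤ K`, then
`A ⊓ C` is a free factor of `C`. -/
theorem key' {K : Type*} [Group K] [IsFreeGroup K] (A : Subgroup K) (hA : A.IsFreeFactor)
    (C : Subgroup K) : (A.subgroupOf C).IsFreeFactor := by
  classical
  obtain ⟨D, hD⟩ := hA
  set Y₁ := IsFreeGroup.Generators ↥A
  set Y₂ := IsFreeGroup.Generators ↥D
  set eA : FreeGroup Y₁ ≃* ↥A := (IsFreeGroup.toFreeGroup ↥A).symm
  set eD : FreeGroup Y₂ ≃* ↥D := (IsFreeGroup.toFreeGroup ↥D).symm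
  -- the homomorphism FreeGroup (Y₁ ⊕ Y₂) →* K
  set Θ : FreeGroup (Y₁ ⊕ Y₂) →* K :=
    FreeGroup.lift (Sum.elim (fun y => (eA (FreeGroup.of y) : K)) fun y => (eD (FreeGroup.of y) : K))
    with hΘdef
  -- as a composition
  set j : FreeGroup (Y₁ ⊕ Y₂) →* Coprod (FreeGroup Y₁) (FreeGroup Y₂) :=
    FreeGroup.lift (Sum.elim (fun y => Coprod.inl (FreeGroup.of y))
      fun y => Coprod.inr (FreeGroup.of y)) with hjdef
  have hj : Function.Bijective ⇑j := by
    set j' : Coprod (FreeGroup Y₁) (FreeGroup Y₂) →* FreeGroup (Y₁ ⊕ Y₂) :=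
      Coprod.lift (FreeGroup.map Sum.inl) (FreeGroup.map Sum.inr) with hj'def
    have h1 : j'.comp j = MonoidHom.id _ := by
      ext x
      cases x <;> simp [hjdef, hj'def]
    have h2 : j.comp j' = MonoidHom.id _ := by
      apply Coprod.hom_ext <;> ext x <;>
        simp [hjdef, hj'def]
    constructor
    · exact Function.LeftInverse.injective (g := ⇑j')
        (fun x => by rw [← MonoidHom.comp_apply, h1, MonoidHom.id_apply])
    · exact Function.RightInverse.surjective (g := ⇑j')
        (fun x => by rw [← MonoidHom.comp_apply, h2, MonoidHom.id_apply])
  have hΘcomp : Θ = (Coprod.lift A.subtype D.subtype).comp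
      ((Coprod.map eA.toMonoidHom eD.toMonoidHom).comp j) := by
    apply FreeGroup.ext_hom
    rintro (y | y) <;> simp [hΘdef, hjdef]
  have hΘbij : Function.Bijective ⇑Θ := by
    rw [hΘcomp]
    have : ⇑((Coprod.lift A.subtype D.subtype).comp
        ((Coprod.map eA.toMonoidHom eD.toMonoidHom).comp j))
        = ⇑(Coprod.lift A.subtype D.subtype) ∘ (⇑(Coprod.map eA.toMonoidHom eD.toMonoidHom) ∘ ⇑j) := by
      simp [MonoidHom.coe_comp, Function.comp_assoc]
    rw [this]
    exact hD.comp ((coprod_map_bijective eA eD).comp hj)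
  set τ : FreeGroup (Y₁ ⊕ Y₂) ≃* K := MulEquiv.ofBijective Θ hΘbij
  -- A is the image of the standard left factor
  have hmapA : Subgroup.map τ.toMonoidHom
      (Subgroup.closure (Set.range (FreeGroup.of ∘ Sum.inl))) = A := by
    rw [MonoidHom.map_closure]
    have himg : ⇑τ.toMonoidHom '' Set.range (FreeGroup.of ∘ Sum.inl)
        = ⇑A.subtype '' (⇑eA.toMonoidHom '' Set.range FreeGroup.of) := by
      rw [Set.image_image, ← Set.range_comp, ← Set.range_comp]
      apply congrArg
      funext y
      show Θ (FreeGroup.of (Sum.inl y)) = _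
      simp [hΘdef]
    rw [himg, ← MonoidHom.map_closure, ← MonoidHom.map_closure eA.toMonoidHom]
    rw [FreeGroup.closure_range_of]
    have h2 : Subgroup.map eA.toMonoidHom ⊤ = ⊤ :=
      Subgroup.map_top_of_surjective _ eA.surjective
    rw [h2, ← MonoidHom.range_eq_map, Subgroup.range_subtype]
  have hC : Subgroup.map τ.toMonoidHom (Subgroup.map τ.symm.toMonoidHom C) = C := by
    ext x
    simp only [Subgroup.mem_map, MulEquiv.coe_toMonoidHom]
    constructor
    · rintro ⟨y, ⟨z, hz, rfl⟩, rfl⟩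
      simpa using hz
    · intro hx
      exact ⟨τ.symm x, ⟨x, hx, rfl⟩, by simp⟩
  have := isFreeFactor_subgroupOf_map τ
    (Subgroup.closure (Set.range (FreeGroup.of ∘ Sum.inl)))
    (Subgroup.map τ.symm.toMonoidHom C) (concreteKey _)
  rwa [hmapA, hC] at this

/-- **Order preservation of the core map (2.2)**: let `K` be a finitely generated free
group, `G ≤ K`, and `H ≤ G` nontrivial. If `C` is a free factor of `G` containing `H`
with `H` filling `C`, and `C'` is a free factor of `K` containing `H` with `H` filling
`C'`, then `C ≤ C'`. -/
theorem core_map_monotone (K : Type*) [Group K] [IsFreeGroup K] (hK : Group.FG K)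
    (G H : Subgroup K) (hHG : H ≤ G) (hH : H ≠ ⊥)
    (C : Subgroup K) (hCG : C ≤ G) (hCff : (C.subgroupOf G).IsFreeFactor)
    (hHC : H ≤ C) (hfill : Fills H C)
    (C' : Subgroup K) (hC'ff : C'.IsFreeFactor) (hHC' : H ≤ C') (hfill' : Fills H C') :
    C ≤ C' := by
  obtain ⟨D₀, hbij⟩ := key' C' hC'ff C
  by_cases hD₀ : D₀ = ⊥
  · -- then C'.subgroupOf C = ⊤, i.e. C ≤ C'
    subst hD₀
    intro c hc
    obtain ⟨w, hw⟩ := hbij.2 ⟨c, hc⟩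
    have : ∀ w : Coprod ↥(C'.subgroupOf C) ↥(⊥ : Subgroup ↥C),
        ((Coprod.lift (C'.subgroupOf C).subtype (⊥ : Subgroup ↥C).subtype) w : ↥C)
          ∈ C'.subgroupOf C := by
      intro w
      induction w using Coprod.induction_on with
      | inl m => simpa using m.2
      | inr n =>
        have hn : (n : ↥C) = 1 := by
          have := n.2
          rwa [Subgroup.mem_bot] at this
        have : ((Coprod.lift (C'.subgroupOf C).subtype (⊥ : Subgroup ↥C).subtype)
            (Coprod.inr n) : ↥C) = 1 := by simp [hn]
        rw [this]
        exact one_mem _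
      | mul x y hx hy => rw [map_mul]; exact mul_mem hx hy
    have hmem := this w
    rw [hw] at hmem
    exact hmem
  · exfalso
    apply hfill
    have hex : ∃ x ∈ H, x ≠ 1 := by
      rw [Subgroup.ne_bot_iff_exists_ne_one] at hH
      obtain ⟨⟨x, hx⟩, h1⟩ := hH
      exact ⟨x, hx, by simpa using h1⟩
    obtain ⟨h₀, hh₀H, hh₀1⟩ := hex
    refine ⟨C'.subgroupOf C, D₀, ?_, hD₀, hbij, Or.inl ⟨1, ?_⟩⟩
    · rw [Subgroup.ne_bot_iff_exists_ne_one]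
      refine ⟨⟨⟨h₀, hHC hh₀H⟩, hHC' hh₀H⟩, ?_⟩
      simp only [ne_eq, Subtype.ext_iff]
      intro h1
      apply hh₀1
      simpa using h1
    · intro h hh
      simp only [one_mul, inv_one, mul_one]
      exact hHC' hh
end

section
/- Let g ≥ 1 be an integer and let F be the free group freely generated by x₁, y₁, …, x_g, y_g. Then F does not split as a free product relative to the cyclic subgroup generated by the element ∏_{i=1}^{g} [x_i, y_i], where [x,y] = x y x⁻¹ y⁻¹; equivalently, ∏_{i=1}^{g} [x_i, y_i] is not contained in any proper free factor of F. -/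
open scoped commutatorElement

/-- The word `∏ i, [xᵢ, yᵢ]` in the free group on `x₁, y₁, …, x_g, y_g`, where
`xᵢ = FreeGroup.of (Sum.inl i)` and `yᵢ = FreeGroup.of (Sum.inr i)` and `[x, y]`
is the commutator `x * y * x⁻¹ * y⁻¹`. -/
def surfaceWord (g : ℕ) : FreeGroup (Fin g ⊕ Fin g) :=
  (List.ofFn fun i : Fin g =>
    ⁅(FreeGroup.of (Sum.inl i) : FreeGroup (Fin g ⊕ Fin g)), FreeGroup.of (Sum.inr i)⁆).prod


namespace SurfaceFillsAux

structure Heis (ι : Type) : Type where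
  l : ι → ℚ
  q : ι → ι → ℚ

namespace Heis
variable {ι : Type}

lemma ext' {x y : Heis ι} (h1 : x.l = y.l) (h2 : x.q = y.q) : x = y := by
  cases x; cases y; cases h1; cases h2; rfl

instance : Mul (Heis ι) :=
  ⟨fun x y => ⟨x.l + y.l, x.q + y.q + fun i j => x.l i * y.l j⟩⟩
instance : One (Heis ι) := ⟨⟨0, 0⟩⟩
instance : Inv (Heis ι) :=
  ⟨fun x => ⟨-x.l, (fun i j => x.l i * x.l j) - x.q⟩⟩

@[simp] lemma mul_l (x y : Heis ι) : (x * y).l = x.l + y.l := rfl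
@[simp] lemma mul_q (x y : Heis ι) :
    (x * y).q = x.q + y.q + fun i j => x.l i * y.l j := rfl
@[simp] lemma one_l : (1 : Heis ι).l = 0 := rfl
@[simp] lemma one_q : (1 : Heis ι).q = 0 := rfl
@[simp] lemma inv_l (x : Heis ι) : (x⁻¹).l = -x.l := rfl
@[simp] lemma inv_q (x : Heis ι) :
    (x⁻¹).q = (fun i j => x.l i * x.l j) - x.q := rfl

instance : Group (Heis ι) where
  mul_assoc x y z := by
    apply ext'
    · simp [add_assoc]
    · funext i j
      simp only [mul_q, mul_l, Pi.add_apply]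
      ring
  one_mul x := by
    apply ext'
    · simp
    · funext i j
      simp
  mul_one x := by
    apply ext'
    · simp
    · funext i j
      simp
  inv_mul_cancel x := by
    apply ext'
    · simp
    · funext i j
      simp only [mul_q, inv_q, inv_l, one_q, Pi.add_apply, Pi.sub_apply, Pi.zero_apply,
        Pi.neg_apply]
      ring

lemma conj_central (x : Heis ι) (q : ι → ι → ℚ) :
    x * ⟨0, q⟩ * x⁻¹ = ⟨0, q⟩ := by
  apply ext'
  · simp
  · funext i j
    simp only [mul_q, mul_l, inv_q, inv_l, Pi.add_apply, Pi.sub_apply, Pi.zero_apply,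
      Pi.neg_apply, add_zero]
    ring

end Heis

variable {ι : Type} [DecidableEq ι]

/-- Coordinate vector. -/
def delta (i : ι) : ι → ℚ := Pi.single i 1

lemma delta_apply (i j : ι) : delta i j = if j = i then 1 else 0 := Pi.single_apply i 1 j

@[simp] lemma delta_same (i : ι) : delta i i = 1 := by simp [delta]

lemma delta_eq_of_ne {i j : ι} (h : j ≠ i) : delta i j = 0 := Pi.single_eq_of_ne h 1

/-- Truncated Magnus expansion. -/
def phi : FreeGroup ι →* Heis ι := FreeGroup.lift fun i => ⟨delta i, 0⟩

@[simp] lemma phi_of (i : ι) : phi (FreeGroup.of i) = ⟨delta i, 0⟩ :=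
  FreeGroup.lift_apply_of

lemma pure_eq_of {S : Type*} (s : S) : (pure s : FreeGroup S) = FreeGroup.of s := rfl

/-- Every homomorphism to `ℚ` factors through the linear part of `phi`. -/
lemma hom_eq_sum [Fintype ι] (h : FreeGroup ι →* Multiplicative ℚ) (u : FreeGroup ι) :
    (h u).toAdd = ∑ i, (phi u).l i * (h (FreeGroup.of i)).toAdd := by
  induction u using FreeGroup.induction_on with
  | C1 => simp
  | of i =>
      simp [pure_eq_of, delta_apply, ite_mul, Finset.sum_ite_eq']
  | inv_of i ih =>
      simpa [pure_eq_of, delta_apply, ite_mul, neg_mul, Finset.sum_ite_eq'] using ih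
  | mul x y ihx ihy =>
      simp only [map_mul, toAdd_mul, Heis.mul_l, Pi.add_apply, add_mul,
        Finset.sum_add_distrib, ihx, ihy]

/-- The ℚ-abelianisation of a free group. -/
noncomputable def beta {S : Type*} : FreeGroup S →* Multiplicative (S →₀ ℚ) :=
  FreeGroup.lift fun s => Multiplicative.ofAdd (Finsupp.single s (1 : ℚ))

@[simp] lemma beta_of {S : Type*} (s : S) :
    beta (FreeGroup.of s) = Multiplicative.ofAdd (Finsupp.single s (1 : ℚ)) :=
  FreeGroup.lift_apply_of

/-- Key structural lemma. -/
lemma mem_and_quot {S : Type*} (Θ : FreeGroup S →* Heis ι) (V : Submodule ℚ (ι → ℚ))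
    (hV : ∀ s, (Θ (FreeGroup.of s)).l ∈ V)
    (VV : Submodule ℚ (ι → ι → ℚ))
    (hVV : ∀ v ∈ V, ∀ w ∈ V, (fun i j => v i * w j) ∈ VV)
    (u : FreeGroup S) :
    (Θ u).l ∈ V ∧
      VV.mkQ (Θ u).q =
        Finsupp.lift (_ ⧸ VV) ℚ S (fun s => VV.mkQ (Θ (FreeGroup.of s)).q)
          (beta u).toAdd := by
  induction u using FreeGroup.induction_on with
  | C1 =>
      refine ⟨by simp [V.zero_mem], ?_⟩
      simp
  | of s =>
      refine ⟨hV s, ?_⟩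
      rw [beta_of, toAdd_ofAdd, Finsupp.lift_apply, Finsupp.sum_single_index (by simp)]
      simp
  | inv_of s ih =>
      have hll : (fun i j => (Θ (FreeGroup.of s)).l i * (Θ (FreeGroup.of s)).l j) ∈ VV :=
        hVV _ (hV s) _ (hV s)
      have h0 : VV.mkQ (fun i j => (Θ (FreeGroup.of s)).l i * (Θ (FreeGroup.of s)).l j) = 0 := by
        rw [Submodule.mkQ_apply]
        exact (Submodule.Quotient.mk_eq_zero VV).2 hll
      constructor
      · simpa using V.neg_mem (hV s)
      · rw [map_inv, map_inv, toAdd_inv, map_neg, Heis.inv_q, map_sub, h0, zero_sub, ih.2]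
  | mul x y ihx ihy =>
      obtain ⟨hx1, hx2⟩ := ihx
      obtain ⟨hy1, hy2⟩ := ihy
      have hll : (fun i j => (Θ x).l i * (Θ y).l j) ∈ VV := hVV _ hx1 _ hy1
      have h0 : VV.mkQ (fun i j => (Θ x).l i * (Θ y).l j) = 0 := by
        rw [Submodule.mkQ_apply]
        exact (Submodule.Quotient.mk_eq_zero VV).2 hll
      constructor
      · simpa using V.add_mem hx1 hy1
      · simp only [map_mul, Heis.mul_q, toAdd_mul, map_add]
        rw [h0, add_zero, hx2, hy2]


section Surface

/-- The quadratic Magnus part of a single commutator `[x_k, y_k]`. -/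
def Emat (g : ℕ) (k : Fin g) : (Fin g ⊕ Fin g) → (Fin g ⊕ Fin g) → ℚ := fun i j =>
  delta (Sum.inl k : Fin g ⊕ Fin g) i * delta (Sum.inr k : Fin g ⊕ Fin g) j
    - delta (Sum.inr k : Fin g ⊕ Fin g) i * delta (Sum.inl k : Fin g ⊕ Fin g) j

/-- The standard symplectic matrix. -/
def Jmat (g : ℕ) : (Fin g ⊕ Fin g) → (Fin g ⊕ Fin g) → ℚ := ∑ k, Emat g k

@[simp] lemma fun_zero {ι : Type} : (fun (_ : ι) (_ : ι) => (0:ℚ)) = (0 : ι → ι → ℚ) := rfl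

lemma prod_central {ι : Type} (L : List (ι → ι → ℚ)) :
    (L.map (fun q => (⟨0, q⟩ : Heis ι))).prod = ⟨0, L.sum⟩ := by
  induction L with
  | nil => rfl
  | cons a t ih =>
      simp only [List.map_cons, List.prod_cons, List.sum_cons, ih]
      apply Heis.ext'
      · simp
      · funext i j
        simp

lemma phi_comm {ι : Type} [DecidableEq ι] (a b : ι) :
    phi ⁅FreeGroup.of a, FreeGroup.of b⁆ =
      ⟨0, fun i j => delta a i * delta b j - delta b i * delta a j⟩ := by
  rw [commutatorElement_def]
  simp only [map_mul, map_inv, phi_of]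
  apply Heis.ext'
  · funext i
    simp
  · funext i j
    simp only [Heis.mul_q, Heis.mul_l, Heis.inv_q, Heis.inv_l, Pi.add_apply, Pi.sub_apply,
      Pi.neg_apply, Pi.zero_apply]
    ring

lemma phi_surfaceWord (g : ℕ) : phi (surfaceWord g) = ⟨0, Jmat g⟩ := by
  rw [surfaceWord, map_list_prod, List.map_ofFn]
  have h1 : (List.ofFn (⇑phi ∘ fun i : Fin g =>
      ⁅(FreeGroup.of (Sum.inl i) : FreeGroup (Fin g ⊕ Fin g)), FreeGroup.of (Sum.inr i)⁆))
      = (List.ofFn (Emat g)).map (fun q => (⟨0, q⟩ : Heis (Fin g ⊕ Fin g))) := by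
    rw [List.map_ofFn]
    congr 1
    funext k
    exact phi_comm _ _
  rw [h1, prod_central, List.sum_ofFn]
  rfl

lemma master {g : ℕ} (C D : Subgroup (FreeGroup (Fin g ⊕ Fin g)))
    (hbij : Function.Bijective ⇑(Monoid.Coprod.lift C.subtype D.subtype))
    (hD : D ≠ ⊥) (w' : FreeGroup (Fin g ⊕ Fin g)) (hw'C : w' ∈ C)
    (hQ : phi w' = ⟨0, Jmat g⟩) : False := by
  classical
  let e : Monoid.Coprod C D ≃* FreeGroup (Fin g ⊕ Fin g) := MulEquiv.ofBijective _ hbij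
  let rC : FreeGroup (Fin g ⊕ Fin g) →* C := (Monoid.Coprod.lift (MonoidHom.id C) (1 : D →* C)).comp e.symm.toMonoidHom
  let rD : FreeGroup (Fin g ⊕ Fin g) →* D := (Monoid.Coprod.lift (1 : C →* D) (MonoidHom.id D)).comp e.symm.toMonoidHom
  have heC : ∀ c : C, e.symm (c : FreeGroup (Fin g ⊕ Fin g)) = Monoid.Coprod.inl c := by
    intro c
    rw [MulEquiv.symm_apply_eq]
    exact (Monoid.Coprod.lift_apply_inl C.subtype D.subtype c).symm
  have heD : ∀ d : D, e.symm (d : FreeGroup (Fin g ⊕ Fin g)) = Monoid.Coprod.inr d := by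
    intro d
    rw [MulEquiv.symm_apply_eq]
    exact (Monoid.Coprod.lift_apply_inr C.subtype D.subtype d).symm
  have hrCc : ∀ c : C, rC (c : FreeGroup (Fin g ⊕ Fin g)) = c := by
    intro c
    simp only [rC, MonoidHom.comp_apply, MulEquiv.coe_toMonoidHom, heC]
    exact Monoid.Coprod.lift_apply_inl _ _ c
  have hrCd : ∀ d : D, rC (d : FreeGroup (Fin g ⊕ Fin g)) = 1 := by
    intro d
    simp only [rC, MonoidHom.comp_apply, MulEquiv.coe_toMonoidHom, heD]
    exact Monoid.Coprod.lift_apply_inr _ _ d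
  have hrDd : ∀ d : D, rD (d : FreeGroup (Fin g ⊕ Fin g)) = d := by
    intro d
    simp only [rD, MonoidHom.comp_apply, MulEquiv.coe_toMonoidHom, heD]
    exact Monoid.Coprod.lift_apply_inr _ _ d
  -- the linear endomorphism induced by the retraction onto C
  let v : (Fin g ⊕ Fin g) → (Fin g ⊕ Fin g) → ℚ :=
    fun i => (phi ((rC (FreeGroup.of i) : C) : FreeGroup (Fin g ⊕ Fin g))).l
  let lam : ((Fin g ⊕ Fin g) → ℚ) →ₗ[ℚ] ((Fin g ⊕ Fin g) → ℚ) :=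
    { toFun := fun m => ∑ i, m i • v i
      map_add' := by intro m m'; simp [add_smul, Finset.sum_add_distrib]
      map_smul' := by intro c m; simp [smul_smul, Finset.smul_sum] }
  have hsingle : ∀ i : Fin g ⊕ Fin g, (∑ j, delta i j • v j) = v i := by
    intro i
    rw [Finset.sum_eq_single i]
    · simp
    · intro b _ hb
      rw [delta_eq_of_ne hb]
      simp
    · intro h
      exact absurd (Finset.mem_univ i) h
  have hlam : ∀ u : FreeGroup (Fin g ⊕ Fin g), (phi ((rC u : C) : FreeGroup (Fin g ⊕ Fin g))).l = lam ((phi u).l) := by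
    intro u
    induction u using FreeGroup.induction_on with
    | C1 => simp [lam]
    | of i =>
        simp only [pure_eq_of, phi_of]
        exact (hsingle i).symm
    | inv_of i ih =>
        simp [map_inv, ih, map_neg]
    | mul x y ihx ihy =>
        simp [map_mul, ihx, ihy, map_add]
  let V : Submodule ℚ ((Fin g ⊕ Fin g) → ℚ) :=
    Submodule.span ℚ (Set.range fun c : C => (phi (c : FreeGroup (Fin g ⊕ Fin g))).l)
  have hVfix : ∀ m ∈ V, lam m = m := by
    intro m hm
    have hle : V ≤ LinearMap.ker (lam - LinearMap.id) := by
      rw [Submodule.span_le]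
      rintro m ⟨c, rfl⟩
      have hfix : lam ((phi ((c : C) : FreeGroup (Fin g ⊕ Fin g))).l) = (phi ((c : C) : FreeGroup (Fin g ⊕ Fin g))).l := by
        rw [← hlam, hrCc]
      simp [LinearMap.mem_ker, LinearMap.sub_apply, hfix]
    have := hle hm
    simpa [LinearMap.mem_ker, LinearMap.sub_apply, sub_eq_zero] using this
  -- a nontrivial element of D with nonzero abelianisation
  obtain ⟨d₀, hd₀D, hd₀1⟩ : ∃ x ∈ D, x ≠ (1 : FreeGroup (Fin g ⊕ Fin g)) := by
    by_contra hcon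
    push_neg at hcon
    exact hD ((Subgroup.eq_bot_iff_forall D).2 hcon)
  let ψD := IsFreeGroup.toFreeGroup (↥D)
  have hne : ψD ⟨d₀, hd₀D⟩ ≠ 1 := by
    intro h
    apply hd₀1
    have : (⟨d₀, hd₀D⟩ : D) = 1 := by
      apply ψD.injective
      rw [h, map_one]
    exact congrArg Subtype.val this
  obtain ⟨p, hp⟩ : ∃ p, p ∈ (ψD ⟨d₀, hd₀D⟩).toWord :=
    List.exists_mem_of_ne_nil _ (fun h => hne (FreeGroup.toWord_eq_nil_iff.mp h))
  let t := p.1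
  let ε : FreeGroup (IsFreeGroup.Generators ↥D) →* Multiplicative ℚ :=
    FreeGroup.lift fun t' => Multiplicative.ofAdd (if t' = t then (1:ℚ) else 0)
  let εhat : FreeGroup (Fin g ⊕ Fin g) →* Multiplicative ℚ := ε.comp ((ψD.toMonoidHom).comp rD)
  let xD : FreeGroup (Fin g ⊕ Fin g) := ((ψD.symm (FreeGroup.of t) : D) : FreeGroup (Fin g ⊕ Fin g))
  have hεxD : (εhat xD).toAdd = 1 := by
    simp only [εhat, MonoidHom.comp_apply, MulEquiv.coe_toMonoidHom]
    rw [show rD xD = ψD.symm (FreeGroup.of t) from hrDd _, MulEquiv.apply_symm_apply]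
    simp [ε, FreeGroup.lift_apply_of]
  have hxD : (phi xD).l ≠ 0 := by
    intro h0
    have hsum := hom_eq_sum εhat xD
    rw [h0, hεxD] at hsum
    simp at hsum
  have hlamxD : lam ((phi xD).l) = 0 := by
    rw [← hlam, show rC xD = 1 from hrCd _]
    simp
  have hxq : (phi xD).l ∉ V := by
    intro hmem
    exact hxD (by rw [← hVfix _ hmem, hlamxD])
  obtain ⟨φf, hφf⟩ : ∃ φf : Module.Dual ℚ (((Fin g ⊕ Fin g) → ℚ) ⧸ V),
      φf (V.mkQ ((phi xD).l)) ≠ 0 := by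
    by_contra hcon
    push_neg at hcon
    have := (Module.forall_dual_apply_eq_zero_iff ℚ (V.mkQ ((phi xD).l))).1 hcon
    rw [Submodule.mkQ_apply, Submodule.Quotient.mk_eq_zero] at this
    exact hxq this
  let f : Module.Dual ℚ ((Fin g ⊕ Fin g) → ℚ) := φf.comp V.mkQ
  have hfV : ∀ m ∈ V, f m = 0 := by
    intro m hm
    have : V.mkQ m = 0 := by rw [Submodule.mkQ_apply, Submodule.Quotient.mk_eq_zero]; exact hm
    simp [f, this]
  let VV : Submodule ℚ ((Fin g ⊕ Fin g) → (Fin g ⊕ Fin g) → ℚ) :=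
    Submodule.span ℚ {q | ∃ a ∈ V, ∃ b ∈ V, q = fun i j => a i * b j}
  let R : ((Fin g ⊕ Fin g) → (Fin g ⊕ Fin g) → ℚ) →ₗ[ℚ] ((Fin g ⊕ Fin g) → ℚ) :=
    { toFun := fun q => fun j => f (fun i => q i j)
      map_add' := by
        intro q q'
        funext j
        show f (fun i => (q + q') i j) = f (fun i => q i j) + f (fun i => q' i j)
        rw [← map_add]
        rfl
      map_smul' := by
        intro c q
        funext j
        show f (fun i => (c • q) i j) = c • f (fun i => q i j)
        rw [← map_smul]
        rfl }
  have hRVV : ∀ q ∈ VV, R q = 0 := by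
    have hle : VV ≤ LinearMap.ker R := by
      rw [Submodule.span_le]
      rintro q ⟨a, ha, b, hb, rfl⟩
      have hab : ∀ j, (fun i => a i * b j) = b j • a := by
        intro j; funext i; simp [mul_comm]
      have : R (fun i j => a i * b j) = 0 := by
        funext j
        show f (fun i => a i * b j) = 0
        rw [hab j, map_smul, hfV a ha]
        simp
      simpa [LinearMap.mem_ker] using this
    intro q hq
    simpa [LinearMap.mem_ker] using hle hq
  -- apply the structural lemma to the inclusion of C
  let ψC := IsFreeGroup.toFreeGroup (↥C)
  let Θ : FreeGroup (IsFreeGroup.Generators ↥C) →* Heis (Fin g ⊕ Fin g) :=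
    phi.comp (C.subtype.comp ψC.symm.toMonoidHom)
  have hVgen : ∀ s, (Θ (FreeGroup.of s)).l ∈ V := fun s =>
    Submodule.subset_span ⟨ψC.symm (FreeGroup.of s), rfl⟩
  have hVVgen : ∀ a ∈ V, ∀ b ∈ V, (fun i j => a i * b j) ∈ VV := fun a ha b hb =>
    Submodule.subset_span ⟨a, ha, b, hb, rfl⟩
  let u := ψC ⟨w', hw'C⟩
  have hΘu : Θ u = phi w' := by
    simp only [Θ, u, MonoidHom.comp_apply, MulEquiv.coe_toMonoidHom,
      MulEquiv.symm_apply_apply]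
    rfl
  have hwl : (phi w').l = 0 := by rw [hQ]
  have hbu : (beta u).toAdd = 0 := by
    ext s
    let χ : FreeGroup (Fin g ⊕ Fin g) →* Multiplicative ℚ :=
      (((Finsupp.applyAddHom s).toMultiplicative).comp
        (beta.comp ψC.toMonoidHom)).comp rC
    have h1 : (χ w').toAdd = (beta u).toAdd s := by
      simp only [χ, MonoidHom.comp_apply]
      rw [show rC w' = ⟨w', hw'C⟩ from hrCc ⟨w', hw'C⟩]
      rfl
    have h2 : (χ w').toAdd = 0 := by
      rw [hom_eq_sum χ w', hwl]
      simp
    rw [← h1, h2]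
    simp
  obtain ⟨-, hquot⟩ := mem_and_quot Θ V hVgen VV hVVgen u
  rw [hΘu, hQ, hbu, map_zero] at hquot
  have hJVV : Jmat g ∈ VV := by
    rw [← Submodule.Quotient.mk_eq_zero VV, ← Submodule.mkQ_apply]
    exact hquot
  have hRJ : R (Jmat g) = 0 := hRVV _ hJVV
  have hrow1 : ∀ a : Fin g, (fun i => Jmat g i (Sum.inr a)) = delta (Sum.inl a : Fin g ⊕ Fin g) := by
    intro a
    funext i
    simp only [Jmat, Finset.sum_apply, Emat, delta_apply]
    simp [delta_apply, Finset.sum_ite_eq']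
  have hrow2 : ∀ a : Fin g, (fun i => Jmat g i (Sum.inl a)) = -delta (Sum.inr a : Fin g ⊕ Fin g) := by
    intro a
    funext i
    simp only [Jmat, Finset.sum_apply, Emat, delta_apply]
    simp [delta_apply, Finset.sum_ite_eq']
  have hf1 : ∀ a : Fin g, f (delta (Sum.inl a : Fin g ⊕ Fin g)) = 0 := by
    intro a
    have := congrFun hRJ (Sum.inr a)
    rw [show R (Jmat g) (Sum.inr a) = f (fun i => Jmat g i (Sum.inr a)) from rfl,
      hrow1 a] at this
    simpa using this
  have hf2 : ∀ a : Fin g, f (delta (Sum.inr a : Fin g ⊕ Fin g)) = 0 := by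
    intro a
    have := congrFun hRJ (Sum.inl a)
    rw [show R (Jmat g) (Sum.inl a) = f (fun i => Jmat g i (Sum.inl a)) from rfl,
      hrow2 a, map_neg] at this
    simpa using this
  have hdecomp : (phi xD).l = ∑ i, (phi xD).l i • delta i := by
    funext j
    rw [Finset.sum_apply, Finset.sum_eq_single j]
    · simp
    · intro b _ hb
      rw [Pi.smul_apply, delta_eq_of_ne (Ne.symm hb)]
      simp
    · intro h
      exact absurd (Finset.mem_univ j) h
  have hfxD : f ((phi xD).l) = 0 := by
    rw [hdecomp, map_sum]
    refine Finset.sum_eq_zero ?_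
    intro i _
    rw [map_smul]
    cases i with
    | inl a => rw [hf1 a]; simp
    | inr a => rw [hf2 a]; simp
  exact hφf (by simpa [f] using hfxD)

end Surface

end SurfaceFillsAux

/-- **The boundary fills the surface group** (used in the proof of Lemma 6.4): for
`g ≥ 1`, the free group on `x₁, y₁, …, x_g, y_g` does not split as a free product
relative to the cyclic subgroup generated by `∏ i, [xᵢ, yᵢ]`; equivalently, this
element lies in no proper free factor. -/
theorem surface_boundary_fills (g : ℕ) (hg : 1 ≤ g) :
    FillsGroup (FreeGroup (Fin g ⊕ Fin g)) (Subgroup.zpowers (surfaceWord g)) ∧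
    ∀ C : Subgroup (FreeGroup (Fin g ⊕ Fin g)),
      C.IsFreeFactor → C ≠ ⊤ → surfaceWord g ∉ C := by
  constructor
  · rintro ⟨C, D, hC, hD, hbij, hconj⟩
    have hw : surfaceWord g ∈ Subgroup.zpowers (surfaceWord g) := Subgroup.mem_zpowers _
    rcases hconj with ⟨g₀, hg₀⟩ | ⟨g₀, hg₀⟩
    · refine SurfaceFillsAux.master C D hbij hD _ (hg₀ _ hw) ?_
      rw [map_mul, map_mul, map_inv, SurfaceFillsAux.phi_surfaceWord]
      exact SurfaceFillsAux.Heis.conj_central _ _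
    · have hswap : Monoid.Coprod.lift D.subtype C.subtype =
          (Monoid.Coprod.lift C.subtype D.subtype).comp (Monoid.Coprod.swap ↥D ↥C) :=
        Monoid.Coprod.hom_ext rfl rfl
      have hsbij : Function.Bijective ⇑(Monoid.Coprod.swap ↥D ↥C) :=
        Function.bijective_iff_has_inverse.2
          ⟨⇑(Monoid.Coprod.swap ↥C ↥D), fun x => Monoid.Coprod.swap_swap x,
            fun x => Monoid.Coprod.swap_swap x⟩
      have hbij' : Function.Bijective ⇑(Monoid.Coprod.lift D.subtype C.subtype) := by
        rw [hswap, MonoidHom.coe_comp]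
        exact hbij.comp hsbij
      refine SurfaceFillsAux.master D C hbij' hC _ (hg₀ _ hw) ?_
      rw [map_mul, map_mul, map_inv, SurfaceFillsAux.phi_surfaceWord]
      exact SurfaceFillsAux.Heis.conj_central _ _
  · rintro C ⟨D, hbij⟩ hCtop hwC
    have hD : D ≠ ⊥ := by
      rintro rfl
      apply hCtop
      rw [Subgroup.eq_top_iff']
      intro x
      obtain ⟨p, rfl⟩ := hbij.2 x
      induction p using Monoid.Coprod.induction_on with
      | inl c => rw [Monoid.Coprod.lift_apply_inl]; exact c.2
      | inr d =>
          rw [Monoid.Coprod.lift_apply_inr]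
          have h1 : (⊥ : Subgroup (FreeGroup (Fin g ⊕ Fin g))).subtype d = 1 :=
            Subgroup.mem_bot.mp d.2
          rw [h1]
          exact C.one_mem
      | mul x y hx hy => rw [map_mul]; exact C.mul_mem hx hy
    exact SurfaceFillsAux.master C D hbij hD _ hwC (SurfaceFillsAux.phi_surfaceWord g)
end

section
/- For every integer g ≥ 1, the group G_g is not a free group. -/
/-- Generators for the group `G_g`: the generator `a_{k, 2i+1}` (odd-indexed, `1 ≤ 2i+1 ≤ 2g`)
is encoded as `(k, i, false)` and the generator `a_{k, 2i+2}` (even-indexed) as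
`(k, i, true)`; in particular `a_{k,1}` is encoded as `(k, 0, false)`. -/
abbrev GropeGenerator (g : ℕ) : Type := ℕ × Fin g × Bool

open scoped commutatorElement

/-- The relator words of `G_g`: for each `k ∈ ℕ`, the relator
`a_{k,1}⁻¹ · ∏_{i=1}^{g} [a_{k+1,2i-1}, a_{k+1,2i}]`, expressing the relation
`a_{k,1} = ∏_{i=1}^{g} [a_{k+1,2i-1}, a_{k+1,2i}]`. -/
def gropeRels (g : ℕ) : Set (FreeGroup (GropeGenerator g)) :=
  { r | ∃ (k : ℕ) (h : 0 < g),
      r = (FreeGroup.of ((k, ⟨0, h⟩, false) : GropeGenerator g))⁻¹ *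
        (List.ofFn fun i : Fin g =>
          ⁅(FreeGroup.of ((k + 1, i, false) : GropeGenerator g) :
              FreeGroup (GropeGenerator g)),
            FreeGroup.of ((k + 1, i, true) : GropeGenerator g)⁆).prod }

/-- The group `G_g`, presented with generators `a_{k,i}` (`k ∈ ℕ`, `1 ≤ i ≤ 2g`) and,
for each `k ∈ ℕ`, the single relation `a_{k,1} = ∏_{i=1}^{g} [a_{k+1,2i-1}, a_{k+1,2i}]`. -/
def GropeGroup (g : ℕ) : Type := PresentedGroup (gropeRels g)

noncomputable instance (g : ℕ) : Group (GropeGroup g) :=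
  inferInstanceAs (Group (PresentedGroup (gropeRels g)))

/-
## Auxiliary development

We show that `G_g` is not free.  The key point is that if `G_g` were free, then the
canonical projection `π : F → G_g` (where `F` is the free group on the generators)
would admit a homomorphic section `s : G_g → F`.  Composing `s ∘ π` with an explicit
"metabelian measuring" homomorphism `μ : F → W`, where `W = (ℕ →₀ ℤ) ⋊ {±1}`, produces
elements `x k = e k + v k` of `ℕ →₀ ℤ` (with `e k` the standard basis and `v k` in the
span `S` of the relator vectors `f k = 2 e (k+1) - e k`) satisfying `x k = 2 • x (k+1)`.
This forces `x 0 = 0` by `2`-divisibility, whence `e 0 ∈ S`, which is impossible since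
any representation of `e 0` as a finite combination of the `f k` would need coefficients
`c j = -2 ^ j` for all `j`. -/

namespace GropeNotFree

/-- The coefficient module: finitely supported integer sequences. -/
abbrev B : Type := ℕ →₀ ℤ

/-- The metabelian measuring group: `B ⋊ {±1}`. -/
@[ext] structure W where
  a : B
  u : ℤˣ

namespace W

noncomputable instance : Mul W := ⟨fun x y => ⟨x.a + (x.u : ℤ) • y.a, x.u * y.u⟩⟩
noncomputable instance : One W := ⟨⟨0, 1⟩⟩
noncomputable instance : Inv W := ⟨fun x => ⟨-(((x.u⁻¹ : ℤˣ) : ℤ) • x.a), x.u⁻¹⟩⟩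

@[simp] lemma mul_a (x y : W) : (x * y).a = x.a + (x.u : ℤ) • y.a := rfl
@[simp] lemma mul_u (x y : W) : (x * y).u = x.u * y.u := rfl
@[simp] lemma one_a : (1 : W).a = 0 := rfl
@[simp] lemma one_u : (1 : W).u = 1 := rfl
@[simp] lemma inv_a (x : W) : (x⁻¹).a = -(((x.u⁻¹ : ℤˣ) : ℤ) • x.a) := rfl
@[simp] lemma inv_u (x : W) : (x⁻¹).u = x.u⁻¹ := rfl

noncomputable instance : Group W where
  mul_assoc x y z := by
    ext m
    · simp [mul_smul, smul_add, add_assoc]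
    · simp [mul_assoc]
  one_mul x := by ext m <;> simp
  mul_one x := by ext m <;> simp
  inv_mul_cancel x := by ext m <;> simp

lemma comm_one_one (z w : B) : ⁅(⟨z, 1⟩ : W), (⟨w, 1⟩ : W)⁆ = 1 := by
  rw [commutatorElement_def]
  ext m <;> simp

lemma comm_one_negone (x y : B) :
    ⁅(⟨x, 1⟩ : W), (⟨y, -1⟩ : W)⁆ = ⟨(2 : ℤ) • x, 1⟩ := by
  rw [commutatorElement_def]
  ext m
  · simp [two_smul]
    ring
  · simp

end W

/-- `e k` is the `k`-th standard basis vector of `B`. -/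
noncomputable def e (k : ℕ) : B := Finsupp.single k 1

/-- The "relator vectors". -/
noncomputable def f (k : ℕ) : B := (2 : ℤ) • e (k + 1) - e k

/-- The submodule of `B` spanned by the relator vectors. -/
noncomputable def S : Submodule ℤ B := Submodule.span ℤ (Set.range f)

variable (g : ℕ)

/-- Where the generators are sent in `W`. -/
noncomputable def genW : GropeGenerator g → W := fun p =>
  if (p.2.1 : ℕ) = 0 then (if p.2.2 then ⟨0, -1⟩ else ⟨e p.1, 1⟩) else 1

/-- The measuring homomorphism. -/
noncomputable def μ : FreeGroup (GropeGenerator g) →* W := FreeGroup.lift (genW g)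

@[simp] lemma μ_of (p : GropeGenerator g) : μ g (FreeGroup.of p) = genW g p :=
  FreeGroup.lift_apply_of

lemma genW_junk (k : ℕ) (i : Fin g) (b : Bool) (h : (i : ℕ) ≠ 0) :
    genW g (k, i, b) = 1 := by simp [genW, h]

lemma genW_a (k : ℕ) (i : Fin g) (h : (i : ℕ) = 0) :
    genW g (k, i, false) = ⟨e k, 1⟩ := by simp [genW, h]

lemma genW_b (k : ℕ) (i : Fin g) (h : (i : ℕ) = 0) :
    genW g (k, i, true) = ⟨0, -1⟩ := by simp [genW, h]

/-- The subgroup `V = S × {1}` of `W`. -/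
noncomputable def V : Subgroup W where
  carrier := {w | w.a ∈ S ∧ w.u = 1}
  mul_mem' := by
    rintro x y ⟨hx, hx1⟩ ⟨hy, hy1⟩
    refine ⟨?_, by simp [hx1, hy1]⟩
    simpa using S.add_mem hx (S.smul_mem ((x.u : ℤ)) hy)
  one_mem' := ⟨S.zero_mem, rfl⟩
  inv_mem' := by
    rintro x ⟨hx, hx1⟩
    refine ⟨?_, by simp [hx1]⟩
    simpa using S.neg_mem (S.smul_mem (((x.u⁻¹ : ℤˣ) : ℤ)) hx)

lemma mem_V {w : W} : w ∈ V ↔ w.a ∈ S ∧ w.u = 1 := Iff.rfl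

instance V_normal : (V).Normal := by
  constructor
  rintro n ⟨hn, hn1⟩ x
  constructor
  · have h2 : (x * n * x⁻¹).a = (x.u : ℤ) • n.a := by
      simp [hn1, smul_smul, ← Units.val_mul]
    rw [h2]
    exact S.smul_mem _ hn
  · simp [hn1]

/-- Helper: the product of a list `ofFn` all of whose positive-index entries are `1`. -/
lemma prod_ofFn_eq_head {M : Type*} [Monoid M] {n : ℕ} (hn : 0 < n) (fc : Fin n → M)
    (h1 : ∀ i : Fin n, (i : ℕ) ≠ 0 → fc i = 1) :
    (List.ofFn fc).prod = fc ⟨0, hn⟩ := by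
  rcases n with - | n
  · omega
  · rw [List.ofFn_succ, List.prod_cons]
    have h2 : (List.ofFn fun i : Fin n => fc i.succ).prod = 1 := by
      apply List.prod_eq_one
      intro x hx
      rw [List.mem_ofFn] at hx
      obtain ⟨i, rfl⟩ := hx
      exact h1 i.succ (by simp)
    rw [h2, mul_one]
    rfl

/-- The image of each relator under `μ`. -/
lemma μ_rel (r : FreeGroup (GropeGenerator g)) (hr : r ∈ gropeRels g) :
    ∃ k : ℕ, μ g r = ⟨f k, 1⟩ := by
  obtain ⟨k, hg, rfl⟩ := hr
  refine ⟨k, ?_⟩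
  rw [map_mul, map_inv, map_list_prod, List.map_ofFn]
  have hprod : (List.ofFn ((μ g) ∘ fun i : Fin g =>
      ⁅(FreeGroup.of ((k + 1, i, false) : GropeGenerator g) : FreeGroup (GropeGenerator g)),
        FreeGroup.of ((k + 1, i, true) : GropeGenerator g)⁆)).prod
      = (⟨(2 : ℤ) • e (k + 1), 1⟩ : W) := by
    rw [prod_ofFn_eq_head hg]
    · show μ g ⁅_, _⁆ = _
      rw [map_commutatorElement]
      simp only [μ_of]
      rw [genW_a g (k+1) ⟨0, hg⟩ rfl, genW_b g (k+1) ⟨0, hg⟩ rfl]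
      exact W.comm_one_negone _ _
    · intro i hi
      show μ g ⁅_, _⁆ = 1
      rw [map_commutatorElement]
      simp only [μ_of]
      rw [genW_junk g (k+1) i false hi, genW_junk g (k+1) i true hi]
      simp
  rw [hprod, μ_of, genW_a g k ⟨0, hg⟩ rfl]
  ext m
  · simp [f]
    ring
  · simp

/-- The main argument. -/
theorem main (hg : 1 ≤ g) (hfree : IsFreeGroup (GropeGroup g)) : False := by
  classical
  have hg0 : 0 < g := hg
  -- the canonical projection and a homomorphic section coming from freeness
  let π : FreeGroup (GropeGenerator g) →* GropeGroup g :=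
    QuotientGroup.mk' (Subgroup.normalClosure (gropeRels g))
  have hπsurj : Function.Surjective π := QuotientGroup.mk'_surjective _
  obtain ⟨ι, ⟨bb⟩⟩ := hfree.nonempty_basis
  choose uu huu using fun i : ι => hπsurj (bb i)
  let s : GropeGroup g →* FreeGroup (GropeGenerator g) :=
    (FreeGroup.lift uu).comp (bb.repr : GropeGroup g →* FreeGroup ι)
  have hsect : ∀ x, π (s x) = x := by
    have h1 : π.comp (FreeGroup.lift uu) =
        (bb.repr.symm : FreeGroup ι →* GropeGroup g) := by
      apply FreeGroup.ext_hom
      intro i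
      simp only [MonoidHom.comp_apply, FreeGroup.lift_apply_of, huu]
      rfl
    intro x
    have h2 : π (FreeGroup.lift uu (bb.repr x)) = bb.repr.symm (bb.repr x) :=
      DFunLike.congr_fun h1 (bb.repr x)
    simpa [s] using h2
  -- anything in the kernel of `π` is measured into `V`
  have hkerN : ∀ w : FreeGroup (GropeGenerator g), π w = 1 → μ g w ∈ V := by
    intro w hw
    have hwN : w ∈ Subgroup.normalClosure (gropeRels g) := by
      have : w ∈ π.ker := hw
      rwa [show π.ker = _ from QuotientGroup.ker_mk' _] at this
    haveI : (V.comap (μ g)).Normal := V_normal.comap _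
    have hle : Subgroup.normalClosure (gropeRels g) ≤ V.comap (μ g) := by
      apply Subgroup.normalClosure_le_normal
      intro r hr
      obtain ⟨k, hk⟩ := μ_rel g r hr
      have : μ g r ∈ V := by
        rw [hk]
        exact ⟨Submodule.subset_span ⟨k, rfl⟩, rfl⟩
      exact this
    exact hle hwN
  -- the composite `τ = μ ∘ s ∘ π`
  let τ : FreeGroup (GropeGenerator g) →* W := (μ g).comp (s.comp π)
  have hτof : ∀ p : GropeGenerator g, ∃ v, v ∈ S ∧ τ (FreeGroup.of p) = genW g p * ⟨v, 1⟩ := by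
    intro p
    set n := (FreeGroup.of p)⁻¹ * s (π (FreeGroup.of p)) with hn
    have h2 : μ g n ∈ V := by
      apply hkerN
      rw [map_mul, map_inv, hsect]
      simp
    obtain ⟨hv, hu⟩ := (mem_V).mp h2
    refine ⟨(μ g n).a, hv, ?_⟩
    have h3 : s (π (FreeGroup.of p)) = FreeGroup.of p * n := by
      rw [hn]; group
    show μ g (s (π (FreeGroup.of p))) = _
    rw [h3, map_mul, μ_of]
    congr 1
    ext m
    · rfl
    · rw [hu]
  -- relators die under `τ`
  have hτrel : ∀ r ∈ gropeRels g, τ r = 1 := by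
    intro r hr
    have h1 : π r = 1 := by
      have : r ∈ π.ker := by
        rw [show π.ker = _ from QuotientGroup.ker_mk' _]
        exact Subgroup.subset_normalClosure hr
      exact this
    show μ g (s (π r)) = 1
    rw [h1, map_one, map_one]
  -- extract the data
  choose va hva hva2 using fun k : ℕ => hτof (k, ⟨0, hg0⟩, false)
  choose vb _ hvb2 using fun k : ℕ => hτof (k, ⟨0, hg0⟩, true)
  -- the fundamental recursion
  have key : ∀ k : ℕ, e k + va k = (2 : ℤ) • (e (k + 1) + va (k + 1)) := by
    intro k
    have hr : ((FreeGroup.of ((k, ⟨0, hg0⟩, false) : GropeGenerator g))⁻¹ *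
        (List.ofFn fun i : Fin g =>
          ⁅(FreeGroup.of ((k + 1, i, false) : GropeGenerator g) :
              FreeGroup (GropeGenerator g)),
            FreeGroup.of ((k + 1, i, true) : GropeGenerator g)⁆).prod) ∈ gropeRels g :=
      ⟨k, hg0, rfl⟩
    have h1 := hτrel _ hr
    rw [map_mul, map_inv, map_list_prod, List.map_ofFn] at h1
    have hprod : (List.ofFn ((τ) ∘ fun i : Fin g =>
        ⁅(FreeGroup.of ((k + 1, i, false) : GropeGenerator g) : FreeGroup (GropeGenerator g)),
          FreeGroup.of ((k + 1, i, true) : GropeGenerator g)⁆)).prod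
        = (⟨(2 : ℤ) • (e (k + 1) + va (k + 1)), 1⟩ : W) := by
      rw [prod_ofFn_eq_head hg0]
      · show τ ⁅_, _⁆ = _
        rw [map_commutatorElement]
        rw [hva2 (k+1), hvb2 (k+1)]
        rw [genW_a g (k+1) ⟨0, hg0⟩ rfl, genW_b g (k+1) ⟨0, hg0⟩ rfl]
        have hA : (⟨e (k+1), 1⟩ : W) * ⟨va (k+1), 1⟩ = ⟨e (k+1) + va (k+1), 1⟩ := by
          ext m <;> simp
        have hB : (⟨0, -1⟩ : W) * ⟨vb (k+1), 1⟩ = ⟨(-1 : ℤ) • vb (k+1), -1⟩ := by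
          ext m <;> simp
        rw [hA, hB]
        exact W.comm_one_negone _ _
      · intro i hi
        show τ ⁅_, _⁆ = 1
        rw [map_commutatorElement]
        obtain ⟨vc, -, hc⟩ := hτof ((k+1), i, false)
        obtain ⟨vd, -, hd⟩ := hτof ((k+1), i, true)
        rw [hc, hd, genW_junk g (k+1) i false hi, genW_junk g (k+1) i true hi,
          one_mul, one_mul]
        exact W.comm_one_one _ _
    rw [hprod] at h1
    rw [hva2 k, genW_a g k ⟨0, hg0⟩ rfl] at h1
    have hA : (⟨e k, 1⟩ : W) * ⟨va k, 1⟩ = ⟨e k + va k, 1⟩ := by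
      ext m <;> simp
    rw [hA] at h1
    -- h1 : (⟨e k + va k, 1⟩)⁻¹ * ⟨2 • (e (k+1) + va (k+1)), 1⟩ = 1
    have h2 : (⟨e k + va k, 1⟩ : W) = ⟨(2 : ℤ) • (e (k + 1) + va (k + 1)), 1⟩ :=
      inv_mul_eq_one.mp h1
    exact congrArg W.a h2
  -- 2-divisibility kills `x 0`
  set x : ℕ → B := fun k => e k + va k with hxdef
  have hx : ∀ k, x k = (2 : ℤ) • x (k + 1) := key
  have hpow : ∀ j, x 0 = ((2 : ℤ) ^ j) • x j := by
    intro j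
    induction j with
    | zero => simp
    | succ j ih =>
      rw [ih, hx j, smul_smul, pow_succ]
  have hx0 : x 0 = 0 := by
    ext m
    simp only [Finsupp.coe_zero, Pi.zero_apply]
    by_contra h0
    have hj : ∀ j : ℕ, (2 : ℤ) ^ j ∣ x 0 m := by
      intro j
      rw [hpow j]
      simp only [Finsupp.smul_apply, smul_eq_mul]
      exact Dvd.intro _ rfl
    have h1 : (2 : ℤ) ^ (x 0 m).natAbs ≤ |x 0 m| :=
      Int.le_of_dvd (abs_pos.mpr h0) ((dvd_abs _ _).mpr (hj _))
    have h2 : ((x 0 m).natAbs : ℤ) < 2 ^ (x 0 m).natAbs := by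
      exact_mod_cast Nat.lt_two_pow_self
    rw [Int.abs_eq_natAbs] at h1
    omega
  -- hence `e 0` lies in the span of the relator vectors
  have he0 : e 0 ∈ S := by
    have h1 : e 0 = -(va 0) := by
      have h2 : e 0 + va 0 = 0 := hx0
      exact eq_neg_of_add_eq_zero_left h2
    rw [h1]
    exact S.neg_mem (hva 0)
  -- ... which is impossible
  obtain ⟨c, hc⟩ := Finsupp.mem_span_range_iff_exists_finsupp.mp he0
  have hcoord : ∀ m : ℕ, (c.sum fun k n => n * ((f k) m)) = (e 0) m := by
    intro m
    rw [← hc]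
    rw [Finsupp.sum_apply]
    apply Finsupp.sum_congr
    intro k _
    simp
  have hf : ∀ k m : ℕ, (f k) m = 2 * (if k + 1 = m then 1 else 0) - (if k = m then 1 else 0) := by
    intro k m
    simp [f, e, Finsupp.single_apply]
  have hs1 : ∀ m : ℕ, (c.sum fun k n => n * (if k = m then (1 : ℤ) else 0)) = c m := by
    intro m
    rw [Finsupp.sum]
    rw [Finset.sum_eq_single m]
    · by_cases hm : m ∈ c.support
      · simp
      · simp [Finsupp.notMem_support_iff.mp hm]
    · intro k _ hk
      simp [hk]
    · intro hm
      simp [Finsupp.notMem_support_iff.mp hm]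
  have hs2 : ∀ m : ℕ, (c.sum fun k n => n * (if k + 1 = m + 1 then (1 : ℤ) else 0)) = c m := by
    intro m
    rw [← hs1 m]
    apply Finsupp.sum_congr
    intro k _
    congr 1
    simp
  have hsplit : ∀ m : ℕ, (c.sum fun k n => n * ((f k) m)) =
      2 * (c.sum fun k n => n * (if k + 1 = m then (1 : ℤ) else 0)) -
        (c.sum fun k n => n * (if k = m then (1 : ℤ) else 0)) := by
    intro m
    rw [Finsupp.mul_sum, ← Finsupp.sum_sub]
    apply Finsupp.sum_congr
    intro k _
    rw [hf]
    ring
  have hc0 : c 0 = -1 := by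
    have h1 := hcoord 0
    rw [hsplit 0, hs1 0] at h1
    have h2 : (c.sum fun k n => n * (if k + 1 = 0 then (1 : ℤ) else 0)) = 0 := by
      have : ∀ k ∈ c.support, c k * (if k + 1 = 0 then (1 : ℤ) else 0) = 0 := by
        intro k _
        simp
      rw [Finsupp.sum]
      exact Finset.sum_eq_zero this
    rw [h2] at h1
    have h3 : (e 0) 0 = 1 := by simp [e]
    rw [h3] at h1
    linarith
  have hcs : ∀ j : ℕ, c (j + 1) = 2 * c j := by
    intro j
    have h1 := hcoord (j + 1)
    rw [hsplit (j + 1), hs1 (j + 1), hs2 j] at h1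
    have h3 : (e 0) (j + 1) = 0 := by simp [e, Finsupp.single_apply]
    rw [h3] at h1
    linarith
  have hcval : ∀ j : ℕ, c j = -(2 ^ j) := by
    intro j
    induction j with
    | zero => simpa using hc0
    | succ j ih => rw [hcs j, ih]; ring
  have hmem : ∀ j : ℕ, j ∈ c.support := by
    intro j
    rw [Finsupp.mem_support_iff, hcval j]
    exact neg_ne_zero.mpr (by positivity)
  have hbig := Finset.le_sup (f := id) (hmem (c.support.sup id + 1))
  simp only [id_eq] at hbig
  omega

end GropeNotFree

/-- **Lemma 6.4 (algebraic form)**: for every `g ≥ 1`, the group `G_g` is not free. -/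
theorem gropeGroup_not_free (g : ℕ) (hg : 1 ≤ g) :
    ¬ Nonempty (IsFreeGroup (GropeGroup g)) := by
  rintro ⟨hfree⟩
  exact GropeNotFree.main g hg hfree
end

section
/- For every integer g ≥ 1, every finitely generated subgroup of the group G_g is a free group; that is, G_g is locally free. -/
open scoped commutatorElement

namespace GropeAux

open FreeGroup List

/-- "no cancellation" between adjacent letters of a free-group word. -/
def NC {β : Type*} (p q : β × Bool) : Prop := p.1 = q.1 → q.2 = p.2

theorem nc_iff {β : Type*} (p q : β × Bool) : NC p q ↔ ¬(p.1 = q.1 ∧ p.2 = !q.2) := by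
  constructor
  · rintro h ⟨h1, h2⟩
    rw [h h1] at h2
    simp at h2
  · intro h h1
    by_contra h2
    exact h ⟨h1, by cases p.2 <;> cases q.2 <;> simp_all⟩

theorem reduce_eq_self_of_chain' {β : Type*} [DecidableEq β] :
    ∀ {L : List (β × Bool)}, L.IsChain NC → FreeGroup.reduce L = L := by
  intro L hL
  induction L with
  | nil => rfl
  | cons x L ih =>
    rw [FreeGroup.reduce.cons, ih hL.tail]
    cases L with
    | nil => rfl
    | cons y t =>
      have hnc : NC x y := List.isChain_cons_cons.1 hL |>.1
      rw [nc_iff] at hnc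
      simp only [if_neg hnc]

theorem chain'_reduce {β : Type*} [DecidableEq β] (L : List (β × Bool)) :
    (FreeGroup.reduce L).IsChain NC := by
  induction L with
  | nil => exact List.isChain_nil
  | cons x L ih =>
    rw [FreeGroup.reduce.cons]
    rcases h : FreeGroup.reduce L with _ | ⟨y, t⟩
    · simp
    · rw [h] at ih
      show List.IsChain NC (if x.1 = y.1 ∧ x.2 = !y.2 then t else x :: y :: t)
      by_cases hc : x.1 = y.1 ∧ x.2 = !y.2
      · rw [if_pos hc]; exact ih.tail
      · rw [if_neg hc]
        exact List.isChain_cons_cons.2 ⟨(nc_iff x y).2 hc, ih⟩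

theorem chain'_toWord {β : Type*} [DecidableEq β] (x : FreeGroup β) :
    x.toWord.IsChain NC := by
  rw [← FreeGroup.reduce_toWord]
  exact chain'_reduce _

theorem toWord_mk_eq {β : Type*} [DecidableEq β] {L : List (β × Bool)} (h : L.IsChain NC) :
    (FreeGroup.mk L).toWord = L := by
  rw [FreeGroup.toWord_mk, reduce_eq_self_of_chain' h]

theorem chain'_invRev {β : Type*} {L : List (β × Bool)} (h : L.IsChain NC) :
    (FreeGroup.invRev L).IsChain NC := by
  unfold FreeGroup.invRev
  rw [List.isChain_reverse, List.isChain_map]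
  refine h.imp ?_
  rintro ⟨a, ba⟩ ⟨b, bb⟩ hnc
  simp only [flip, NC] at *
  intro he
  have := hnc he.symm
  simp_all

theorem head?_invRev {β : Type*} (L : List (β × Bool)) :
    (FreeGroup.invRev L).head? = L.getLast?.map (fun p => (p.1, !p.2)) := by
  unfold FreeGroup.invRev
  rw [List.head?_reverse, List.getLast?_map]

theorem getLast?_invRev {β : Type*} (L : List (β × Bool)) :
    (FreeGroup.invRev L).getLast? = L.head?.map (fun p => (p.1, !p.2)) := by
  unfold FreeGroup.invRev
  rw [List.getLast?_reverse, List.head?_map]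


section CW
variable {β : Type*} {g : ℕ}


/-- the 4-letter word for a commutator of two generators -/
def chunk (x y : β) : List (β × Bool) := [(x, true), (y, true), (x, false), (y, false)]

theorem mk_chunk (x y : β) : FreeGroup.mk (chunk x y) = ⁅FreeGroup.of x, FreeGroup.of y⁆ := by
  have hx : FreeGroup.of x = FreeGroup.mk [(x, true)] := rfl
  have hy : FreeGroup.of y = FreeGroup.mk [(y, true)] := rfl
  have hxi : (FreeGroup.of x)⁻¹ = FreeGroup.mk [(x, false)] := by
    rw [hx, FreeGroup.inv_mk]; rfl
  have hyi : (FreeGroup.of y)⁻¹ = FreeGroup.mk [(y, false)] := by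
    rw [hy, FreeGroup.inv_mk]; rfl
  show _ = FreeGroup.of x * FreeGroup.of y * (FreeGroup.of x)⁻¹ * (FreeGroup.of y)⁻¹
  rw [hxi, hyi, hx, hy, FreeGroup.mul_mk, FreeGroup.mul_mk, FreeGroup.mul_mk]
  rfl

/-- the word for the product of commutators -/
def cword (t : Fin g × Bool → β) : List (β × Bool) :=
  (List.ofFn fun i : Fin g => chunk (t (i, false)) (t (i, true))).flatten

theorem mk_flatten {ll : List (List (β × Bool))} :
    FreeGroup.mk ll.flatten = (ll.map FreeGroup.mk).prod := by
  induction ll with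
  | nil => simp [← FreeGroup.one_eq_mk]
  | cons l ll ih => simp [List.flatten_cons, ← FreeGroup.mul_mk, ih]

theorem mk_cword (t : Fin g × Bool → β) :
    FreeGroup.mk (cword t) =
      (List.ofFn fun i : Fin g =>
        ⁅FreeGroup.of (t (i, false)), FreeGroup.of (t (i, true))⁆).prod := by
  rw [cword, mk_flatten, List.map_ofFn]
  congr 1



theorem cword_ne_nil (hg : 0 < g) (t : Fin g × Bool → β) : cword t ≠ [] := by
  obtain ⟨g', rfl⟩ : ∃ g', g = g' + 1 := ⟨g - 1, by omega⟩
  rw [cword, List.ofFn_succ, List.flatten_cons]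
  simp [chunk]

theorem cword_head? (hg : 0 < g) (t : Fin g × Bool → β) :
    ∃ i : Fin g, (cword t).head? = some (t (i, false), true) := by
  obtain ⟨g', rfl⟩ : ∃ g', g = g' + 1 := ⟨g - 1, by omega⟩
  refine ⟨0, ?_⟩
  rw [cword, List.ofFn_succ, List.flatten_cons]
  rfl

theorem cword_getLast? (hg : 0 < g) (t : Fin g × Bool → β) :
    ∃ i : Fin g, (cword t).getLast? = some (t (i, true), false) := by
  obtain ⟨g', rfl⟩ : ∃ g', g = g' + 1 := ⟨g - 1, by omega⟩
  refine ⟨Fin.last g', ?_⟩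
  rw [cword, List.ofFn_succ', List.concat_eq_append, List.flatten_append]
  rw [List.getLast?_append_of_ne_nil]
  · rfl
  · simp [chunk]

theorem chain'_chunk {x y : β} (h : x ≠ y) : (chunk x y).IsChain NC := by
  refine List.isChain_cons_cons.2 ⟨?_, List.isChain_cons_cons.2 ⟨?_, List.isChain_cons_cons.2 ⟨?_, ?_⟩⟩⟩
  · intro _; rfl
  · intro he; exact absurd he.symm h
  · intro _; rfl
  · simp

theorem chain'_cword (t : Fin g × Bool → β) (ht : Function.Injective t) :
    (cword t).IsChain NC := by
  rw [cword, List.isChain_flatten]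
  · constructor
    · intro l hl
      rw [List.mem_ofFn] at hl
      obtain ⟨i, rfl⟩ := hl
      refine chain'_chunk fun he => ?_
      have := ht he
      simp at this
    · rw [List.isChain_ofFn]
      intro i hi
      intro x hx y hy
      simp only [chunk, List.getLast?, List.head?] at hx hy
      -- getLast? of 4-elt list
      have hx' : x = (t (⟨i, Nat.lt_of_succ_lt hi⟩, true), false) := by
        simpa [chunk] using hx.symm
      have hy' : y = (t (⟨i+1, hi⟩, false), true) := by
        simpa [chunk] using hy.symm
      subst hx' hy'
      intro he
      have := ht he
      simp at this
  · intro h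
    rw [List.mem_ofFn] at h
    obtain ⟨i, hi⟩ := h
    exact absurd hi.symm (by simp [chunk])


end CW

section KeyLemmaOuter
variable {β : Type*} {g : ℕ}

section KeyLemma

variable {α : Type*} [DecidableEq α] [DecidableEq β]
variable (s0 : α) (ι : α → β) (t : Fin g × Bool → β)

/-- letter-wise substitution -/
def extL (s0 : α) (ι : α → β) (t : Fin g × Bool → β) : α × Bool → List (β × Bool) :=
  fun p => if p.1 = s0 then (if p.2 then cword t else FreeGroup.invRev (cword t))
    else [(ι p.1, p.2)]

theorem extL_ne_nil (hg : 0 < g) (p : α × Bool) : extL s0 ι t p ≠ [] := by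
  rw [extL]
  split
  · split
    · exact cword_ne_nil hg t
    · intro h
      exact cword_ne_nil hg t (FreeGroup.invRev_injective (by rw [h]; rfl))
  · simp

theorem lift_mk_flatMap (F : α → FreeGroup β)
    (hF0 : F s0 = FreeGroup.mk (cword t))
    (hFa : ∀ a, a ≠ s0 → F a = FreeGroup.of (ι a)) (L : List (α × Bool)) :
    FreeGroup.lift F (FreeGroup.mk L) = FreeGroup.mk (L.flatMap (extL s0 ι t)) := by
  induction L with
  | nil =>
    rw [← FreeGroup.one_eq_mk, _root_.map_one, List.flatMap_nil, ← FreeGroup.one_eq_mk]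
  | cons p L ih =>
    obtain ⟨a, b⟩ := p
    have hsplit : FreeGroup.mk ((a, b) :: L) = FreeGroup.mk [(a, b)] * FreeGroup.mk L := by
      rw [FreeGroup.mul_mk]; rfl
    rw [hsplit, _root_.map_mul, ih, List.flatMap_cons, ← FreeGroup.mul_mk]
    congr 1
    have hof : ∀ c : β, FreeGroup.of c = FreeGroup.mk [(c, true)] := fun _ => rfl
    have hofi : ∀ c : β, (FreeGroup.of c)⁻¹ = FreeGroup.mk [(c, false)] := fun c => by
      rw [hof c, FreeGroup.inv_mk]; rfl
    have hone : FreeGroup.mk [(a, true)] = FreeGroup.of a := rfl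
    have honei : FreeGroup.mk [(a, false)] = (FreeGroup.of a)⁻¹ := by
      rw [← hone, FreeGroup.inv_mk]; rfl
    cases b
    · rw [honei, _root_.map_inv, FreeGroup.lift_apply_of]
      by_cases h : a = s0
      · subst h
        rw [hF0, FreeGroup.inv_mk]
        congr 1
        simp [extL]
      · rw [hFa a h, hofi]
        congr 1
        simp [extL, h]
    · rw [hone, FreeGroup.lift_apply_of]
      by_cases h : a = s0
      · subst h
        rw [hF0]
        congr 1
        simp [extL]
      · rw [hFa a h, hof]
        congr 1
        simp [extL, h]

theorem chain'_extL (ht : Function.Injective t) (p : α × Bool) : (extL s0 ι t p).IsChain NC := by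
  rw [extL]
  split
  · split
    · exact chain'_cword t ht
    · exact chain'_invRev (chain'_cword t ht)
  · simp

theorem extL_head? (hg : 0 < g) (p : α × Bool) :
    (p.1 = s0 ∧ ∃ j : Fin g, (extL s0 ι t p).head? = some (t (j, !p.2), true)) ∨
      (p.1 ≠ s0 ∧ (extL s0 ι t p).head? = some (ι p.1, p.2)) := by
  rw [extL]
  by_cases h : p.1 = s0
  · rw [if_pos h]
    left
    refine ⟨h, ?_⟩
    cases hb : p.2
    · rw [if_neg (by simp [hb])]
      rw [head?_invRev]
      obtain ⟨i, hi⟩ := cword_getLast? hg t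
      exact ⟨i, by rw [hi]; try rfl⟩
    · rw [if_pos (by simp [hb])]
      obtain ⟨i, hi⟩ := cword_head? hg t
      exact ⟨i, by rw [hi]; try rfl⟩
  · rw [if_neg h]
    right
    exact ⟨h, rfl⟩

theorem extL_getLast? (hg : 0 < g) (p : α × Bool) :
    (p.1 = s0 ∧ ∃ j : Fin g, (extL s0 ι t p).getLast? = some (t (j, p.2), false)) ∨
      (p.1 ≠ s0 ∧ (extL s0 ι t p).getLast? = some (ι p.1, p.2)) := by
  rw [extL]
  by_cases h : p.1 = s0
  · rw [if_pos h]
    left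
    refine ⟨h, ?_⟩
    cases hb : p.2
    · rw [if_neg (by simp [hb])]
      rw [getLast?_invRev]
      obtain ⟨i, hi⟩ := cword_head? hg t
      exact ⟨i, by rw [hi]; try rfl⟩
    · rw [if_pos (by simp [hb])]
      obtain ⟨i, hi⟩ := cword_getLast? hg t
      exact ⟨i, by rw [hi]; try rfl⟩
  · rw [if_neg h]
    right
    exact ⟨h, rfl⟩

theorem chain'_flatMap (hg : 0 < g)
    (hι : ∀ a a', a ≠ s0 → a' ≠ s0 → ι a = ι a' → a = a')
    (ht : Function.Injective t)
    (hd : ∀ a, a ≠ s0 → ∀ p, ι a ≠ t p)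
    {L : List (α × Bool)} (hL : L.IsChain NC) :
    (L.flatMap (extL s0 ι t)).IsChain NC := by
  rw [List.flatMap, List.isChain_flatten]
  · refine ⟨?_, ?_⟩
    · intro l hl
      rw [List.mem_map] at hl
      obtain ⟨p, _, rfl⟩ := hl
      exact chain'_extL s0 ι t ht p
    · rw [List.isChain_map]
      refine hL.imp ?_
      intro p q hnc x hx y hy
      rcases extL_getLast? s0 ι t hg p with ⟨hps, jp, hp⟩ | ⟨hps, hp⟩ <;>
        rcases extL_head? s0 ι t hg q with ⟨hqs, jq, hq⟩ | ⟨hqs, hq⟩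
      · rw [hp] at hx; rw [hq] at hy
        cases hx; cases hy
        intro he
        exfalso
        have hpair := ht he
        have hb : p.2 = !q.2 := congrArg Prod.snd hpair
        have hqq : q.2 = p.2 := hnc (hps.trans hqs.symm)
        rw [hqq] at hb
        exact (Bool.eq_not_self p.2).mp hb
      · rw [hp] at hx; rw [hq] at hy
        cases hx; cases hy
        intro he
        exact absurd he.symm (hd q.1 hqs _)
      · rw [hp] at hx; rw [hq] at hy
        cases hx; cases hy
        intro he
        exact absurd he (hd p.1 hps _)
      · rw [hp] at hx; rw [hq] at hy
        cases hx; cases hy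
        intro he
        have := hι p.1 q.1 hps hqs he
        exact hnc this
  · intro h
    rw [List.mem_map] at h
    obtain ⟨p, _, hp⟩ := h
    exact extL_ne_nil s0 ι t hg p hp

theorem lift_injective_key
    (hg : 0 < g) (hι : ∀ a a', a ≠ s0 → a' ≠ s0 → ι a = ι a' → a = a')
    (ht : Function.Injective t)
    (hd : ∀ a, a ≠ s0 → ∀ p, ι a ≠ t p)
    (F : α → FreeGroup β)
    (hF0 : F s0 = FreeGroup.mk (cword t))
    (hFa : ∀ a, a ≠ s0 → F a = FreeGroup.of (ι a)) :
    Function.Injective (FreeGroup.lift F) := by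
  rw [injective_iff_map_eq_one]
  intro x hx
  have h1 : FreeGroup.mk (x.toWord.flatMap (extL s0 ι t)) = 1 := by
    rw [← lift_mk_flatMap s0 ι t F hF0 hFa, FreeGroup.mk_toWord]
    exact hx
  have h2 := chain'_flatMap s0 ι t hg hι ht hd (chain'_toWord x)
  have h3 : x.toWord.flatMap (extL s0 ι t) = [] := by
    have h5 := toWord_mk_eq h2
    rw [h1, FreeGroup.toWord_one] at h5
    exact h5.symm
  have h4 : x.toWord = [] := by
    cases hw : x.toWord with
    | nil => rfl
    | cons p L =>
      exfalso
      rw [hw, List.flatMap_cons] at h3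
      exact extL_ne_nil s0 ι t hg p (List.append_eq_nil_iff.mp h3).1
  rw [← FreeGroup.toWord_eq_nil_iff]
  exact h4

end KeyLemma

end KeyLemmaOuter
end GropeAux


namespace GropeAux
variable {g : ℕ}

/-- `x` is a generator `a_{k,1}`. -/
abbrev IsA1 {g : ℕ} (x : GropeGenerator g) : Prop := (x.2.1 : ℕ) = 0 ∧ x.2.2 = false

/-- the free basis at stage `m`: all generators of level `≤ m` except the `a_{j,1}` with
`j < m`. -/
abbrev BGen (g m : ℕ) : Type := {x : GropeGenerator g // x.1 ≤ m ∧ (x.1 = m ∨ ¬ IsA1 x)}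

theorem of_val_eq {γ : Type*} {p : γ → Prop} {x y : γ} (hx : p x) (hy : p y) (h : x = y) :
    (FreeGroup.of (⟨x, hx⟩ : {z // p z})) = FreeGroup.of ⟨y, hy⟩ := by subst h; rfl

variable (hg : 0 < g)

/-- `eAux hg M d` is the canonical expansion of the generator `a_{M-d,1}` as a word in the
free basis at stage `M`. -/
def eAux (hg : 0 < g) (M : ℕ) : ℕ → FreeGroup (BGen g M)
  | 0 => FreeGroup.of ⟨(M, ⟨0, hg⟩, false), le_rfl, Or.inl rfl⟩
  | d + 1 =>
    (List.ofFn fun i : Fin g =>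
      ⁅(if h : (i : ℕ) = 0 then eAux hg M d
        else FreeGroup.of ⟨(M - d, i, false), Nat.sub_le M d, Or.inr fun hA => h hA.1⟩),
        FreeGroup.of ⟨(M - d, i, true), Nat.sub_le M d,
          Or.inr fun hA => Bool.noConfusion hA.2⟩⁆).prod

/-- expansion of an arbitrary generator in the stage-`M` basis. -/
def E (hg : 0 < g) (M : ℕ) (x : GropeGenerator g) : FreeGroup (BGen g M) :=
  if h : x.1 ≤ M ∧ (x.1 = M ∨ ¬ IsA1 x) then FreeGroup.of ⟨x, h⟩
  else if _ : x.1 < M then eAux hg M (M - x.1) else 1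

theorem E_of (M : ℕ) (x : GropeGenerator g) (h1 : x.1 ≤ M) (h2 : x.1 = M ∨ ¬ IsA1 x) :
    E hg M x = FreeGroup.of ⟨x, h1, h2⟩ := dif_pos ⟨h1, h2⟩

theorem E_a1 (M : ℕ) (x : GropeGenerator g) (h1 : x.1 < M) (h2 : IsA1 x) :
    E hg M x = eAux hg M (M - x.1) := by
  rw [E, dif_neg, dif_pos h1]
  rintro ⟨-, hb⟩
  rcases hb with hb | hb
  · omega
  · exact hb h2

theorem eAux_succ {M k : ℕ} (hk : k < M) :
    eAux hg M (M - k) =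
      (List.ofFn fun i : Fin g =>
        ⁅E hg M (k + 1, i, false), E hg M (k + 1, i, true)⁆).prod := by
  have hd : M - k = (M - k - 1) + 1 := by omega
  set d := M - k - 1 with hdd
  have hMd : M - d = k + 1 := by omega
  rw [hd, eAux]
  congr 1
  congr 1
  funext i
  congr 1
  · by_cases hi : (i : ℕ) = 0
    · rw [dif_pos hi]
      by_cases hkM : k + 1 = M
      · have hd0 : d = 0 := by omega
        rw [hd0, eAux, E_of hg M _ (by omega) (Or.inl hkM)]
        exact of_val_eq _ _ (by rw [hkM]; exact congrArg _ (congrArg₂ _ (Fin.ext hi).symm rfl))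
      · rw [E_a1 hg M _ (by omega) ⟨hi, rfl⟩]
        have : M - (k + 1) = d := by omega
        rw [this]
    · rw [dif_neg hi, E_of hg M _ (by omega) (Or.inr fun hA => hi hA.1)]
      exact of_val_eq _ _ (by rw [hMd])
  · rw [E_of hg M _ (by omega) (Or.inr fun hA => Bool.noConfusion hA.2)]
    exact of_val_eq _ _ (by rw [hMd])

/-- the `k`-th relator word. -/
def relword (hg : 0 < g) (k : ℕ) : FreeGroup (GropeGenerator g) :=
  (FreeGroup.of ((k, ⟨0, hg⟩, false) : GropeGenerator g))⁻¹ *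
    (List.ofFn fun i : Fin g =>
      ⁅(FreeGroup.of ((k + 1, i, false) : GropeGenerator g) :
          FreeGroup (GropeGenerator g)),
        FreeGroup.of ((k + 1, i, true) : GropeGenerator g)⁆).prod

theorem mem_gropeRels_iff (r : FreeGroup (GropeGenerator g)) :
    r ∈ gropeRels g ↔ ∃ k, r = relword hg k := by
  constructor
  · rintro ⟨k, h, rfl⟩
    exact ⟨k, rfl⟩
  · rintro ⟨k, rfl⟩
    exact ⟨k, hg, rfl⟩

/-- lifting-to-stage-`M` homomorphism on the full free group. -/
def Ψ (hg : 0 < g) (M : ℕ) : FreeGroup (GropeGenerator g) →* FreeGroup (BGen g M) :=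
  FreeGroup.lift (E hg M)

theorem hom_ofFn_prod {G H : Type*} [Group G] [Group H] (f : G →* H) (u : Fin g → G) :
    f (List.ofFn u).prod = (List.ofFn fun i => f (u i)).prod := by
  rw [map_list_prod, List.map_ofFn]
  rfl

theorem Psi_rel {M k : ℕ} (hk : k < M) : Ψ hg M (relword hg k) = 1 := by
  rw [relword, _root_.map_mul, _root_.map_inv, Ψ, FreeGroup.lift_apply_of, hom_ofFn_prod]
  have h1 : E hg M (k, ⟨0, hg⟩, false) = eAux hg M (M - k) :=
    E_a1 hg M _ hk ⟨rfl, rfl⟩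
  rw [h1]
  have h2 : (List.ofFn fun i : Fin g =>
      (FreeGroup.lift (E hg M)) ⁅(FreeGroup.of ((k + 1, i, false) : GropeGenerator g) :
          FreeGroup (GropeGenerator g)), FreeGroup.of ((k + 1, i, true) : GropeGenerator g)⁆) =
      (List.ofFn fun i : Fin g =>
        ⁅E hg M (k + 1, i, false), E hg M (k + 1, i, true)⁆) := by
    congr 1
    funext i
    rw [map_commutatorElement, FreeGroup.lift_apply_of, FreeGroup.lift_apply_of]
  rw [h2, ← eAux_succ hg hk, inv_mul_cancel]

/-- inclusion of stage-`m` basis words into stage-`M` basis words (after expansion). -/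
def Φ (hg : 0 < g) (m M : ℕ) : FreeGroup (BGen g m) →* FreeGroup (BGen g M) :=
  FreeGroup.lift (fun b : BGen g m => E hg M b.val)

theorem Phi_of (m M : ℕ) (b : BGen g m) : Φ hg m M (FreeGroup.of b) = E hg M b.val :=
  FreeGroup.lift_apply_of

theorem Phi_self (M : ℕ) (x : FreeGroup (BGen g M)) : Φ hg M M x = x := by
  have h : Φ hg M M = MonoidHom.id _ := by
    apply FreeGroup.ext_hom
    intro b
    rw [Phi_of, E_of hg M b.val b.prop.1 b.prop.2]
    rfl
  rw [h]
  rfl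

/-- the distinguished stage-`m` basis element `a_{m,1}`. -/
def s0 (hg : 0 < g) (m : ℕ) : BGen g m := ⟨(m, ⟨0, hg⟩, false), le_rfl, Or.inl rfl⟩

/-- the new generators of the stage-`(m+1)` basis. -/
def tmap (m : ℕ) (p : Fin g × Bool) : BGen g (m + 1) :=
  ⟨(m + 1, p.1, p.2), le_rfl, Or.inl rfl⟩

theorem ne_s0_not_isA1 {m : ℕ} (b : BGen g m) (h : b ≠ s0 hg m) : ¬ IsA1 b.val := by
  intro hA
  rcases b.prop.2 with h1 | h1
  · apply h
    apply Subtype.ext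
    have hfin : b.val.2.1 = ⟨0, hg⟩ := Fin.ext hA.1
    have : b.val = (b.val.1, b.val.2.1, b.val.2.2) := rfl
    rw [s0]
    rw [this, h1, hfin, hA.2]
  · exact h1 hA

/-- the embedding of surviving stage-`m` basis elements into stage `m+1`. -/
def iotaB (hg : 0 < g) (m : ℕ) (b : BGen g m) : BGen g (m + 1) :=
  if h : b = s0 hg m then tmap m (⟨0, hg⟩, false)
  else ⟨b.val, Nat.le_succ_of_le b.prop.1, Or.inr (ne_s0_not_isA1 hg b h)⟩

/-- the one-step substitution map. -/
def Fsub (hg : 0 < g) (m : ℕ) (b : BGen g m) : FreeGroup (BGen g (m + 1)) :=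
  if b = s0 hg m then FreeGroup.mk (cword (tmap m)) else FreeGroup.of (iotaB hg m b)

def φstep (hg : 0 < g) (m : ℕ) : FreeGroup (BGen g m) →* FreeGroup (BGen g (m + 1)) :=
  FreeGroup.lift (Fsub hg m)

theorem tmap_injective (m : ℕ) : Function.Injective (tmap (g := g) m) := by
  intro p q h
  have := congrArg (fun b => b.val.2) h
  simpa [tmap] using this

theorem phstep_injective (m : ℕ) : Function.Injective (φstep hg m) := by
  apply lift_injective_key (s0 hg m) (iotaB hg m) (tmap m) hg
  · intro a a' ha ha' h
    rw [iotaB, dif_neg ha, iotaB, dif_neg ha'] at h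
    simp only [Subtype.mk.injEq] at h
    exact Subtype.ext h
  · exact tmap_injective m
  · intro a ha p
    rw [iotaB, dif_neg ha]
    intro h
    have := congrArg (fun b => b.val.1) h
    simp only [tmap] at this
    have h1 := a.prop.1
    omega
  · rw [Fsub, if_pos rfl]
  · intro a ha
    rw [Fsub, if_neg ha]

theorem phstep_of (m : ℕ) (b : BGen g m) : φstep hg m (FreeGroup.of b) = Fsub hg m b :=
  FreeGroup.lift_apply_of

theorem Phi_comp {m M : ℕ} (hm : m < M) (x : FreeGroup (BGen g m)) :
    Φ hg (m + 1) M (φstep hg m x) = Φ hg m M x := by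
  have key : (Φ hg (m + 1) M).comp (φstep hg m) = Φ hg m M := by
    apply FreeGroup.ext_hom
    intro b
    rw [MonoidHom.comp_apply, phstep_of, Phi_of]
    by_cases h : b = s0 hg m
    · rw [Fsub, if_pos h, mk_cword, hom_ofFn_prod]
      have h2 : (List.ofFn fun i : Fin g =>
          Φ hg (m + 1) M
            ⁅FreeGroup.of (tmap m (i, false)), FreeGroup.of (tmap m (i, true))⁆) =
          (List.ofFn fun i : Fin g =>
            ⁅E hg M (m + 1, i, false), E hg M (m + 1, i, true)⁆) := by
        congr 1
        funext i
        rw [map_commutatorElement, Phi_of, Phi_of]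
        rfl
      rw [h2, ← eAux_succ hg hm, h]
      rw [E_a1 hg M (s0 hg m).val hm ⟨rfl, rfl⟩]
      rfl
    · rw [Fsub, if_neg h, Phi_of, iotaB, dif_neg h]
  rw [← key]
  rfl

theorem Phi_injective : ∀ (d m M : ℕ), M = m + d → Function.Injective (Φ hg m M) := by
  intro d
  induction d with
  | zero =>
    intro m M hM
    have hMm : M = m := by omega
    subst hMm
    intro x y hxy
    rw [← Phi_self hg M x, ← Phi_self hg M y, hxy]
  | succ d ih =>
    intro m M hM
    intro x y h
    have h2 : Φ hg (m + 1) M (φstep hg m x) = Φ hg (m + 1) M (φstep hg m y) := by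
      rw [Phi_comp hg (by omega), Phi_comp hg (by omega), h]
    exact phstep_injective hg m (ih (m + 1) M (by omega) h2)

section Quotient
variable {g : ℕ} (hg : 0 < g)

/-- canonical projection. -/
noncomputable def mkQ (g : ℕ) : FreeGroup (GropeGenerator g) →* GropeGroup g :=
  PresentedGroup.mk (gropeRels g)

/-- the stage-`m` free subgroup map. -/
noncomputable def ψ (g m : ℕ) : FreeGroup (BGen g m) →* GropeGroup g :=
  FreeGroup.lift (fun b : BGen g m => mkQ g (FreeGroup.of b.val))

theorem psi_of (m : ℕ) (b : BGen g m) : ψ g m (FreeGroup.of b) = mkQ g (FreeGroup.of b.val) :=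
  FreeGroup.lift_apply_of

/-- inclusion of free groups. -/
def inclFG (g m : ℕ) : FreeGroup (BGen g m) →* FreeGroup (GropeGenerator g) :=
  FreeGroup.lift (fun b : BGen g m => FreeGroup.of b.val)

theorem psi_eq (m : ℕ) (x : FreeGroup (BGen g m)) : ψ g m x = mkQ g (inclFG g m x) := by
  have h : ψ g m = (mkQ g).comp (inclFG g m) := by
    apply FreeGroup.ext_hom
    intro b
    rw [psi_of]
    rw [MonoidHom.comp_apply]
    congr 1
    try exact (FreeGroup.lift_apply_of).symm
  rw [h]
  rfl


theorem Psi_incl (M m : ℕ) (x : FreeGroup (BGen g m)) :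
    Ψ hg M (inclFG g m x) = Φ hg m M x := by
  have h : (Ψ hg M).comp (inclFG g m) = Φ hg m M := by
    apply FreeGroup.ext_hom
    intro b
    rw [MonoidHom.comp_apply, Phi_of]
    have h1 : inclFG g m (FreeGroup.of b) = FreeGroup.of b.val := FreeGroup.lift_apply_of
    rw [h1]
    exact FreeGroup.lift_apply_of
  rw [← h]
  rfl

/-- relators of level `< M` -/
def relsBelow (hg : 0 < g) (M : ℕ) : Set (FreeGroup (GropeGenerator g)) :=
  {r | ∃ k, k < M ∧ r = relword hg k}

theorem iSup_nc_normal :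
    (⨆ M, Subgroup.normalClosure (relsBelow hg M)).Normal := by
  constructor
  intro x hx gg
  have hdir : Directed (· ≤ ·) (fun M => Subgroup.normalClosure (relsBelow hg M)) := by
    intro a b
    refine ⟨max a b, ?_, ?_⟩ <;>
      exact Subgroup.normalClosure_mono (fun r hr => by
        obtain ⟨k, hk, rfl⟩ := hr
        exact ⟨k, by omega, rfl⟩)
  rw [Subgroup.mem_iSup_of_directed hdir] at hx ⊢
  obtain ⟨M, hM⟩ := hx
  exact ⟨M, (Subgroup.normalClosure_normal).conj_mem x hM gg⟩

theorem exists_relsBelow {w : FreeGroup (GropeGenerator g)}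
    (hw : w ∈ Subgroup.normalClosure (gropeRels g)) :
    ∃ M, w ∈ Subgroup.normalClosure (relsBelow hg M) := by
  have hdir : Directed (· ≤ ·) (fun M => Subgroup.normalClosure (relsBelow hg M)) := by
    intro a b
    refine ⟨max a b, ?_, ?_⟩ <;>
      exact Subgroup.normalClosure_mono (fun r hr => by
        obtain ⟨k, hk, rfl⟩ := hr
        exact ⟨k, by omega, rfl⟩)
  have hle : Subgroup.normalClosure (gropeRels g) ≤
      ⨆ M, Subgroup.normalClosure (relsBelow hg M) := by
    haveI := iSup_nc_normal hg
    apply Subgroup.normalClosure_le_normal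
    intro r hr
    rw [SetLike.mem_coe, Subgroup.mem_iSup_of_directed hdir]
    obtain ⟨k, rfl⟩ := (mem_gropeRels_iff hg r).1 hr
    exact ⟨k + 1, Subgroup.subset_normalClosure ⟨k, by omega, rfl⟩⟩
  have := hle hw
  rw [Subgroup.mem_iSup_of_directed hdir] at this
  exact this

theorem psi_injective (hgx : 0 < g) (m : ℕ) : Function.Injective (ψ g m) := by
  rw [injective_iff_map_eq_one]
  intro x hx
  rw [psi_eq m x] at hx
  have hmem : inclFG g m x ∈ Subgroup.normalClosure (gropeRels g) := by
    rwa [← QuotientGroup.eq_one_iff (inclFG g m x)]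
  obtain ⟨M0, hM0⟩ := exists_relsBelow hgx hmem
  set M := max M0 (m + 1) with hM
  have hmem2 : inclFG g m x ∈ Subgroup.normalClosure (relsBelow hgx M) := by
    refine Subgroup.normalClosure_mono ?_ hM0
    rintro r ⟨k, hk, rfl⟩
    exact ⟨k, by omega, rfl⟩
  have hker : Subgroup.normalClosure (relsBelow hgx M) ≤ (Ψ hgx M).ker := by
    apply Subgroup.normalClosure_le_normal
    rintro r ⟨k, hk, rfl⟩
    rw [SetLike.mem_coe, MonoidHom.mem_ker]
    exact Psi_rel hgx hk
  have h1 : Ψ hgx M (inclFG g m x) = 1 := hker hmem2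
  rw [Psi_incl hgx M m x] at h1
  apply Phi_injective hgx (M - m) m M (by omega)
  rw [h1, _root_.map_one]

theorem psi_range_mono (hgx : 0 < g) (m : ℕ) : (ψ g m).range ≤ (ψ g (m + 1)).range := by
  rw [ψ]
  apply FreeGroup.range_lift_le
  rintro _ ⟨b, rfl⟩
  by_cases hA : IsA1 b.val ∧ b.val.1 = m
  · -- b is the distinguished generator a_{m,1}; use the relation
    have hbv : b.val = ((m, ⟨0, hgx⟩, false) : GropeGenerator g) := by
      have h1 : b.val = (b.val.1, b.val.2.1, b.val.2.2) := rfl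
      have e2 : (b.val : GropeGenerator g).2.1 = (⟨0, hgx⟩ : Fin g) := Fin.ext hA.1.1
      rw [h1, hA.2, e2, hA.1.2]
    have hrel : mkQ g (relword hgx m) = 1 := by
      apply (QuotientGroup.eq_one_iff _).2
      exact Subgroup.subset_normalClosure ((mem_gropeRels_iff hgx _).2 ⟨m, rfl⟩)
    rw [relword, _root_.map_mul, _root_.map_inv] at hrel
    have heq : mkQ g (FreeGroup.of ((m, ⟨0, hgx⟩, false) : GropeGenerator g)) =
        mkQ g (List.ofFn fun i : Fin g =>
          ⁅(FreeGroup.of ((m + 1, i, false) : GropeGenerator g) :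
              FreeGroup (GropeGenerator g)),
            FreeGroup.of ((m + 1, i, true) : GropeGenerator g)⁆).prod := by
      exact inv_mul_eq_one.1 hrel
    show mkQ g (FreeGroup.of (b.val : GropeGenerator g)) ∈
      ((ψ g (m + 1)).range : Set (GropeGroup g))
    rw [hbv, SetLike.mem_coe, heq, hom_ofFn_prod]
    apply Subgroup.list_prod_mem
    intro y hy
    rw [List.mem_ofFn] at hy
    obtain ⟨i, rfl⟩ := hy
    show (mkQ g) ⁅(FreeGroup.of ((m + 1, i, false) : GropeGenerator g) :
        FreeGroup (GropeGenerator g)),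
      FreeGroup.of ((m + 1, i, true) : GropeGenerator g)⁆ ∈ (ψ g (m + 1)).range
    rw [map_commutatorElement]
    have hf : mkQ g (FreeGroup.of ((m + 1, i, false) : GropeGenerator g)) ∈
        (ψ g (m + 1)).range :=
      ⟨FreeGroup.of ⟨(m + 1, i, false), le_rfl, Or.inl rfl⟩, psi_of (m + 1) _⟩
    have ht : mkQ g (FreeGroup.of ((m + 1, i, true) : GropeGenerator g)) ∈
        (ψ g (m + 1)).range :=
      ⟨FreeGroup.of ⟨(m + 1, i, true), le_rfl, Or.inl rfl⟩, psi_of (m + 1) _⟩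
    rw [commutatorElement_def]
    exact mul_mem (mul_mem (mul_mem hf ht) (inv_mem hf)) (inv_mem ht)
  · have hnA : ¬ IsA1 b.val := by
      intro h
      rcases b.prop.2 with h1 | h1
      · exact hA ⟨h, h1⟩
      · exact h1 h
    exact ⟨FreeGroup.of ⟨b.val, Nat.le_succ_of_le b.prop.1, Or.inr hnA⟩, psi_of (m + 1) _⟩

theorem psi_range_le (hgx : 0 < g) {m m' : ℕ} (h : m ≤ m') :
    (ψ g m).range ≤ (ψ g m').range := by
  induction m', h using Nat.le_induction with
  | base => exact le_rfl
  | succ n hn ih => exact ih.trans (psi_range_mono hgx n)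

theorem generator_mem_range (x : GropeGenerator g) :
    (PresentedGroup.of (rels := gropeRels g) x : GropeGroup g) ∈ (ψ g x.1).range :=
  ⟨FreeGroup.of ⟨x, le_rfl, Or.inl rfl⟩, psi_of x.1 _⟩

end Quotient

end GropeAux

/-- **Local freeness of `G_g`** (algebraic content of Theorem 2): for every `g ≥ 1`,
every finitely generated subgroup of `G_g` is a free group. -/
theorem gropeGroup_locally_free (g : ℕ) (hg : 1 ≤ g) :
    ∀ H : Subgroup (GropeGroup g), H.FG → Nonempty (IsFreeGroup H) := by
  intro H hFG
  have hg0 : 0 < g := hg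
  obtain ⟨S, hS⟩ := hFG
  have hdir : Directed (· ≤ ·) fun m => (GropeAux.ψ g m).range := fun a b =>
    ⟨max a b, GropeAux.psi_range_le hg0 (le_max_left _ _),
      GropeAux.psi_range_le hg0 (le_max_right _ _)⟩
  have htop : ∀ x : GropeGroup g, ∃ m, x ∈ (GropeAux.ψ g m).range := by
    intro x
    have hx : x ∈ ⨆ m, (GropeAux.ψ g m).range := by
      have h1 : Subgroup.closure (Set.range (PresentedGroup.of (rels := gropeRels g))) = ⊤ :=
        PresentedGroup.closure_range_of _
      have h2 : x ∈ Subgroup.closure (Set.range (PresentedGroup.of (rels := gropeRels g))) := by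
        rw [h1]; trivial
      refine (Subgroup.closure_le _).2 ?_ h2
      rintro _ ⟨x0, rfl⟩
      have := GropeAux.generator_mem_range (g := g) x0
      exact SetLike.le_def.1 (le_iSup (fun m => (GropeAux.ψ g m).range) x0.1) this
    rwa [Subgroup.mem_iSup_of_directed hdir] at hx
  have hfin : ∀ S : Finset (GropeGroup g), ∃ m, (S : Set (GropeGroup g)) ⊆ (GropeAux.ψ g m).range := by
    intro S
    classical
    induction S using Finset.induction_on with
    | empty => exact ⟨0, by simp⟩
    | @insert a S' hnotmem ih =>
      obtain ⟨m1, hm1⟩ := ih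
      obtain ⟨m2, hm2⟩ := htop a
      refine ⟨max m1 m2, ?_⟩
      intro y hy
      rcases Finset.mem_insert.1 (by exact_mod_cast hy) with h | h
      · subst h
        exact GropeAux.psi_range_le hg0 (le_max_right _ _) hm2
      · exact GropeAux.psi_range_le hg0 (le_max_left _ _) (hm1 h)
  obtain ⟨m, hm⟩ := hfin S
  have hHle : H ≤ (GropeAux.ψ g m).range := by
    rw [← hS]
    exact (Subgroup.closure_le _).2 hm
  have hinj := GropeAux.psi_injective (g := g) hg0 m
  set K := Subgroup.comap (GropeAux.ψ g m) H with hK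
  have hmap : Subgroup.map (GropeAux.ψ g m) K = H := by
    rw [hK, Subgroup.map_comap_eq]
    exact inf_eq_right.2 hHle
  have e1 : K ≃* Subgroup.map (GropeAux.ψ g m) K :=
    Subgroup.equivMapOfInjective K (GropeAux.ψ g m) hinj
  have e2 : K ≃* H := e1.trans (MulEquiv.subgroupCongr hmap)
  exact ⟨IsFreeGroup.ofMulEquiv e2⟩
end
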